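/- arXiv:2604.04504 — 4 statements merged into one kernel-verified Lean document; each statement's English description precedes it below -/
import Mathlib

section
/- Let Ω ⊆ ℝ² be a domain and let φ ∈ C²(Ω, ℝ) be subharmonic (Δφ ≥ 0 on Ω). Then for every u ∈ C_c^∞(Ω, ℝ_2): ‖Du − (Dφ)u‖²_φ ≥ ∫_Ω (Δφ) |u|² e^{−φ} dV. -/
open scoped BigOperators
open MeasureTheory

noncomputable section

/-- The real Clifford algebra `ℝ_n`, realized concretely as the space of
coefficient families indexed by subsets `A ⊆ {1,…,n}` (the standard basis `e_A`). -/
abbrev Cl (n : ℕ) : Type := Finset (Fin n) → ℝ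

namespace Cliff

variable {n : ℕ}

/-- The sign occurring in `e_A * e_B = csign A B • e_{A ∆ B}` for the Clifford algebra
with relations `e_j ^ 2 = -1` and `e_j e_k = - e_k e_j` (`j ≠ k`). -/
def csign (A B : Finset (Fin n)) : ℝ :=
  (-1 : ℝ) ^ ((((A ×ˢ B).filter fun p => p.2 < p.1)).card + (A ∩ B).card)

/-- The Clifford product on `ℝ_n`. -/
def cmul (f g : Cl n) : Cl n :=
  fun C => ∑ A : Finset (Fin n), csign A (symmDiff A C) * f A * g (symmDiff A C)

/-- The unit `1` of `ℝ_n`. -/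
def cone : Cl n := fun A => if A = (∅ : Finset (Fin n)) then 1 else 0

/-- The generator `e_j`. -/
def e (j : Fin n) : Cl n := fun A => if A = {j} then 1 else 0

/-- Clifford conjugation: the anti-automorphism with `1̄ = 1` and `ē_j = -e_j`;
on the basis, `conj e_A = (-1)^(|A|(|A|+1)/2) e_A`. -/
def conj (f : Cl n) : Cl n :=
  fun A => (-1 : ℝ) ^ (A.card * (A.card + 1) / 2) * f A

/-- Scalar part `Re f = f_∅`. -/
def re (f : Cl n) : ℝ := f ∅

/-- Squared norm `|f|² = Σ_A f_A²`. -/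
def normSq (f : Cl n) : ℝ := ∑ A : Finset (Fin n), (f A) ^ 2

/-- Embedding of a Euclidean vector as the Clifford vector `x = Σ_j x_j e_j`. -/
def vec (x : Fin n → ℝ) : Cl n := ∑ j : Fin n, x j • e j

/-- Embedding of a real scalar into `ℝ_n`. -/
def scal (a : ℝ) : Cl n := a • cone

/-- The Euclidean norm `|x|` of a point of `ℝⁿ`. -/
def nrm (x : Fin n → ℝ) : ℝ := Real.sqrt (∑ j : Fin n, (x j) ^ 2)

/-- `j`-th partial derivative of a Clifford-valued function. -/
def pd (j : Fin n) (u : (Fin n → ℝ) → Cl n) (x : Fin n → ℝ) : Cl n :=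
  fderiv ℝ u x (Pi.single j 1)

/-- The Dirac operator `Du = Σ_j e_j ∂_j u`. -/
def Dirac (u : (Fin n → ℝ) → Cl n) : (Fin n → ℝ) → Cl n :=
  fun x => ∑ j : Fin n, cmul (e j) (pd j u x)

/-- `j`-th partial derivative of a scalar function. -/
def pds (j : Fin n) (φ : (Fin n → ℝ) → ℝ) (x : Fin n → ℝ) : ℝ :=
  fderiv ℝ φ x (Pi.single j 1)

/-- `Dφ = Σ_j (∂_j φ) e_j` as a Clifford vector. -/
def Dgrad (φ : (Fin n → ℝ) → ℝ) (x : Fin n → ℝ) : Cl n :=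
  vec (fun j => pds j φ x)

/-- Laplacian of a scalar function, `Δφ = Σ_j ∂_j² φ`. -/
def lap (φ : (Fin n → ℝ) → ℝ) (x : Fin n → ℝ) : ℝ :=
  ∑ j : Fin n, pds j (pds j φ) x

/-- Componentwise Laplacian of a Clifford-valued function. -/
def clap (u : (Fin n → ℝ) → Cl n) (x : Fin n → ℝ) : Cl n :=
  ∑ j : Fin n, pd j (pd j u) x

/-- `|∇φ|² = Σ_j (∂_j φ)²`. -/
def gradSq (φ : (Fin n → ℝ) → ℝ) (x : Fin n → ℝ) : ℝ :=
  ∑ j : Fin n, (pds j φ x) ^ 2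

/-- The formal adjoint `δ_φ u = Du - (Dφ)u` of the Dirac operator. -/
def delta (φ : (Fin n → ℝ) → ℝ) (u : (Fin n → ℝ) → Cl n) : (Fin n → ℝ) → Cl n :=
  fun x => Dirac u x - cmul (Dgrad φ x) (u x)

/-- `u ∈ C_c^∞(Ω, ℝ_n)`: a smooth compactly supported function with support in `Ω`. -/
def IsTest (Ω : Set (Fin n → ℝ)) (u : (Fin n → ℝ) → Cl n) : Prop :=
  ContDiff ℝ (⊤ : ℕ∞) u ∧ HasCompactSupport u ∧ tsupport u ⊆ Ω

/-- Squared weighted L² norm `‖u‖²_φ = ∫_Ω |u|² e^{-φ} dV`. -/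
def wnorm (Ω : Set (Fin n → ℝ)) (φ : (Fin n → ℝ) → ℝ) (u : (Fin n → ℝ) → Cl n) : ℝ :=
  ∫ x in Ω, normSq (u x) * Real.exp (-φ x)

/-- Weighted inner product `⟨u, v⟩_φ = ∫_Ω Re(u v̄) e^{-φ} dV`. -/
def wip (Ω : Set (Fin n → ℝ)) (φ : (Fin n → ℝ) → ℝ)
    (u v : (Fin n → ℝ) → Cl n) : ℝ :=
  ∫ x in Ω, re (cmul (u x) (conj (v x))) * Real.exp (-φ x)

/-- Membership in `L²_φ(Ω, ℝ_n)`. -/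
def MemL2 (Ω : Set (Fin n → ℝ)) (φ : (Fin n → ℝ) → ℝ) (u : (Fin n → ℝ) → Cl n) : Prop :=
  AEStronglyMeasurable u (volume.restrict Ω) ∧
    IntegrableOn (fun x => normSq (u x) * Real.exp (-φ x)) Ω

/-- `Du = f` in the sense of distributions on `Ω`:
`⟨f, v⟩_0 = ⟨u, Dv⟩_0` for all test functions `v`. -/
def DistDirac (Ω : Set (Fin n → ℝ)) (u f : (Fin n → ℝ) → Cl n) : Prop :=
  ∀ v : (Fin n → ℝ) → Cl n, IsTest Ω v → wip Ω 0 f v = wip Ω 0 u (Dirac v)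

/-- `Δu = f` in the sense of distributions on `Ω`. -/
def DistLap (Ω : Set (Fin n → ℝ)) (u f : (Fin n → ℝ) → Cl n) : Prop :=
  ∀ v : (Fin n → ℝ) → Cl n, IsTest Ω v → wip Ω 0 f v = wip Ω 0 u (clap v)

/-- A domain: a connected open set. -/
def IsDomain (Ω : Set (Fin n → ℝ)) : Prop := IsOpen Ω ∧ IsConnected Ω

end Cliff

section DiracAux

open Cliff

abbrev E2 := Fin 2 → ℝ

lemma sum4 (g : Finset (Fin 2) → ℝ) :
    ∑ A : Finset (Fin 2), g A = g ∅ + g {0} + g {1} + g {0, 1} := by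
  have h : (Finset.univ : Finset (Finset (Fin 2))) = {∅, {0}, {1}, {0, 1}} := by decide
  rw [h, Finset.sum_insert (by decide), Finset.sum_insert (by decide),
    Finset.sum_insert (by decide), Finset.sum_singleton]
  ring

lemma cs {k : ℕ} (A B : Finset (Fin 2))
    (h : (((A ×ˢ B).filter fun p => p.2 < p.1)).card + (A ∩ B).card = k) :
    Cliff.csign A B = (-1 : ℝ) ^ k := by rw [Cliff.csign, h]

lemma sd (A C D : Finset (Fin 2)) (h : symmDiff A C = D) : symmDiff A C = D := h

lemma cmul_c0 (f g : Cl 2) :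
    Cliff.cmul f g ∅ = f ∅ * g ∅ - f {0} * g {0} - f {1} * g {1} - f {0,1} * g {0,1} := by
  rw [Cliff.cmul, sum4]
  rw [sd ∅ ∅ ∅ (by decide), sd {0} ∅ {0} (by decide), sd {1} ∅ {1} (by decide),
    sd {0,1} ∅ {0,1} (by decide)]
  rw [cs (k := 0) _ _ (by decide), cs (k := 1) _ _ (by decide), cs (k := 1) _ _ (by decide),
    cs (k := 3) _ _ (by decide)]
  ring

lemma cmul_c1 (f g : Cl 2) :
    Cliff.cmul f g {0} = f ∅ * g {0} + f {0} * g ∅ + f {1} * g {0,1} - f {0,1} * g {1} := by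
  rw [Cliff.cmul, sum4]
  rw [sd ∅ {0} {0} (by decide), sd {0} {0} ∅ (by decide), sd {1} {0} {0,1} (by decide),
    sd {0,1} {0} {1} (by decide)]
  rw [cs (k := 0) _ _ (by decide), cs (k := 0) _ _ (by decide), cs (k := 2) _ _ (by decide),
    cs (k := 1) _ _ (by decide)]
  ring

lemma cmul_c2 (f g : Cl 2) :
    Cliff.cmul f g {1} = f ∅ * g {1} - f {0} * g {0,1} + f {1} * g ∅ + f {0,1} * g {0} := by
  rw [Cliff.cmul, sum4]
  rw [sd ∅ {1} {1} (by decide), sd {0} {1} {0,1} (by decide), sd {1} {1} ∅ (by decide),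
    sd {0,1} {1} {0} (by decide)]
  rw [cs (k := 0) _ _ (by decide), cs (k := 1) _ _ (by decide), cs (k := 0) _ _ (by decide),
    cs (k := 2) _ _ (by decide)]
  ring

lemma cmul_c3 (f g : Cl 2) :
    Cliff.cmul f g {0,1} = f ∅ * g {0,1} + f {0} * g {1} - f {1} * g {0} + f {0,1} * g ∅ := by
  rw [Cliff.cmul, sum4]
  rw [sd ∅ {0,1} {0,1} (by decide), sd {0} {0,1} {1} (by decide), sd {1} {0,1} {0} (by decide),
    sd {0,1} {0,1} ∅ (by decide)]
  rw [cs (k := 0) _ _ (by decide), cs (k := 0) _ _ (by decide), cs (k := 1) _ _ (by decide),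
    cs (k := 0) _ _ (by decide)]
  ring

lemma normSq_eq (f : Cl 2) :
    Cliff.normSq f = f ∅ ^ 2 + f {0} ^ 2 + f {1} ^ 2 + f {0,1} ^ 2 := by
  rw [Cliff.normSq, sum4]

lemma e0_c0 : Cliff.e (0 : Fin 2) ∅ = 0 := by rw [Cliff.e]; exact if_neg (by decide)
lemma e0_c1 : Cliff.e (0 : Fin 2) {0} = 1 := by rw [Cliff.e]; exact if_pos rfl
lemma e0_c2 : Cliff.e (0 : Fin 2) {1} = 0 := by rw [Cliff.e]; exact if_neg (by decide)
lemma e0_c3 : Cliff.e (0 : Fin 2) {0,1} = 0 := by rw [Cliff.e]; exact if_neg (by decide)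
lemma e1_c0 : Cliff.e (1 : Fin 2) ∅ = 0 := by rw [Cliff.e]; exact if_neg (by decide)
lemma e1_c1 : Cliff.e (1 : Fin 2) {0} = 0 := by rw [Cliff.e]; exact if_neg (by decide)
lemma e1_c2 : Cliff.e (1 : Fin 2) {1} = 1 := by rw [Cliff.e]; exact if_pos rfl
lemma e1_c3 : Cliff.e (1 : Fin 2) {0,1} = 0 := by rw [Cliff.e]; exact if_neg (by decide)

lemma vec_apply (y : Fin 2 → ℝ) (A : Finset (Fin 2)) :
    Cliff.vec y A = y 0 * Cliff.e (0 : Fin 2) A + y 1 * Cliff.e (1 : Fin 2) A := by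
  rw [Cliff.vec, Fin.sum_univ_two]
  simp [Pi.add_apply, Pi.smul_apply, smul_eq_mul]

end DiracAux
section DiracCalc

variable {f g h k : E2 → ℝ}

lemma pds_add (hf : Differentiable ℝ f) (hg : Differentiable ℝ g) (j : Fin 2) (x : E2) :
    Cliff.pds j (fun y => f y + g y) x = Cliff.pds j f x + Cliff.pds j g x := by
  unfold Cliff.pds; rw [fderiv_fun_add (hf x) (hg x)]; simp

lemma pds_sub (hf : Differentiable ℝ f) (hg : Differentiable ℝ g) (j : Fin 2) (x : E2) :
    Cliff.pds j (fun y => f y - g y) x = Cliff.pds j f x - Cliff.pds j g x := by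
  unfold Cliff.pds; rw [fderiv_fun_sub (hf x) (hg x)]; simp

lemma pds_neg (j : Fin 2) (x : E2) :
    Cliff.pds j (fun y => -f y) x = -Cliff.pds j f x := by
  unfold Cliff.pds; rw [fderiv_fun_neg]; simp

lemma pds_const_mul (hf : Differentiable ℝ f) (c : ℝ) (j : Fin 2) (x : E2) :
    Cliff.pds j (fun y => c * f y) x = c * Cliff.pds j f x := by
  unfold Cliff.pds; rw [fderiv_const_mul (hf x) c]; simp

lemma pds_mul (hf : Differentiable ℝ f) (hg : Differentiable ℝ g) (j : Fin 2) (x : E2) :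
    Cliff.pds j (fun y => f y * g y) x
      = Cliff.pds j f x * g x + f x * Cliff.pds j g x := by
  unfold Cliff.pds; rw [fderiv_fun_mul (hf x) (hg x)]; simp [smul_eq_mul]; ring

lemma pds_mul3 (hf : Differentiable ℝ f) (hg : Differentiable ℝ g) (hh : Differentiable ℝ h)
    (j : Fin 2) (x : E2) :
    Cliff.pds j (fun y => f y * g y * h y) x
      = Cliff.pds j f x * g x * h x + f x * Cliff.pds j g x * h x
        + f x * g x * Cliff.pds j h x := by
  rw [pds_mul (f := fun y => f y * g y) (hf.mul hg) hh, pds_mul hf hg]; ring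

lemma pds_mul4 (hf : Differentiable ℝ f) (hg : Differentiable ℝ g) (hh : Differentiable ℝ h)
    (hk : Differentiable ℝ k) (j : Fin 2) (x : E2) :
    Cliff.pds j (fun y => f y * g y * h y * k y) x
      = Cliff.pds j f x * g x * h x * k x + f x * Cliff.pds j g x * h x * k x
        + f x * g x * Cliff.pds j h x * k x + f x * g x * h x * Cliff.pds j k x := by
  rw [pds_mul (f := fun y => f y * g y * h y) ((hf.mul hg).mul hh) hk, pds_mul3 hf hg hh]; ring

lemma pds_exp_neg (hf : Differentiable ℝ f) (j : Fin 2) (x : E2) :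
    Cliff.pds j (fun y => Real.exp (-f y)) x
      = -Cliff.pds j f x * Real.exp (-f x) := by
  unfold Cliff.pds
  have h1 : HasFDerivAt (fun y => Real.exp (-f y))
      (Real.exp (-f x) • (-fderiv ℝ f x)) x :=
    by have h := (Real.hasDerivAt_exp (-f x)).comp_hasFDerivAt x ((hf x).hasFDerivAt.neg); exact h
  rw [h1.fderiv]; simp [smul_eq_mul]; ring

lemma contDiff_pds {m n : ℕ} (hf : ContDiff ℝ n f) (hmn : m + 1 ≤ n) (j : Fin 2) :
    ContDiff ℝ m fun y => Cliff.pds j f y := by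
  have h1 : ContDiff ℝ m (fderiv ℝ f) := hf.fderiv_right (by exact_mod_cast hmn)
  exact (ContinuousLinearMap.apply ℝ ℝ (Pi.single j 1)).contDiff.comp h1

lemma pds_swap (hf : ContDiff ℝ 3 f) (i j : Fin 2) (x : E2) :
    Cliff.pds i (fun y => Cliff.pds j f y) x = Cliff.pds j (fun y => Cliff.pds i f y) x := by
  have hsym : IsSymmSndFDerivAt ℝ f x :=
    hf.contDiffAt.isSymmSndFDerivAt (by norm_num)
  have hd : DifferentiableAt ℝ (fderiv ℝ f) x := by
    have : ContDiff ℝ 1 (fderiv ℝ f) := hf.fderiv_right (by norm_num)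
    exact (this.differentiable (by norm_num)) x
  have key : ∀ v w : E2, fderiv ℝ (fun y => fderiv ℝ f y w) x v
      = fderiv ℝ (fderiv ℝ f) x v w := by
    intro v w
    rw [fderiv_clm_apply hd (differentiableAt_const w)]
    simp
  unfold Cliff.pds
  rw [key, key, hsym]

end DiracCalc
section DiracCalc2
variable {f g h k : E2 → ℝ}

lemma pds_cmul4 (c : ℝ) (hf : Differentiable ℝ f) (hg : Differentiable ℝ g)
    (hh : Differentiable ℝ h) (hk : Differentiable ℝ k) (j : Fin 2) (x : E2) :
    Cliff.pds j (fun y => c * (f y * g y * h y * k y)) x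
      = c * (Cliff.pds j f x * g x * h x * k x + f x * Cliff.pds j g x * h x * k x
        + f x * g x * Cliff.pds j h x * k x + f x * g x * h x * Cliff.pds j k x) := by
  rw [pds_const_mul (f := fun y => f y * g y * h y * k y) (((hf.mul hg).mul hh).mul hk) c, pds_mul4 hf hg hh hk]

lemma pds_cmul3 (c : ℝ) (hf : Differentiable ℝ f) (hg : Differentiable ℝ g)
    (hh : Differentiable ℝ h) (j : Fin 2) (x : E2) :
    Cliff.pds j (fun y => c * (f y * g y * h y)) x
      = c * (Cliff.pds j f x * g x * h x + f x * Cliff.pds j g x * h x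
        + f x * g x * Cliff.pds j h x) := by
  rw [pds_const_mul (f := fun y => f y * g y * h y) ((hf.mul hg).mul hh) c, pds_mul3 hf hg hh]

lemma pds_add8 {T1 T2 T3 T4 T5 T6 T7 T8 : E2 → ℝ}
    (h1 : Differentiable ℝ T1) (h2 : Differentiable ℝ T2) (h3 : Differentiable ℝ T3)
    (h4 : Differentiable ℝ T4) (h5 : Differentiable ℝ T5) (h6 : Differentiable ℝ T6)
    (h7 : Differentiable ℝ T7) (h8 : Differentiable ℝ T8) (j : Fin 2) (x : E2) :
    Cliff.pds j (fun y => ((T1 y + T2 y) + (T3 y + T4 y)) + ((T5 y + T6 y) + (T7 y + T8 y))) x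
      = Cliff.pds j T1 x + Cliff.pds j T2 x + Cliff.pds j T3 x + Cliff.pds j T4 x
        + Cliff.pds j T5 x + Cliff.pds j T6 x + Cliff.pds j T7 x + Cliff.pds j T8 x := by
  rw [pds_add (f := fun y => (T1 y + T2 y) + (T3 y + T4 y)) (g := fun y => (T5 y + T6 y) + (T7 y + T8 y)) ((h1.add h2).add (h3.add h4)) ((h5.add h6).add (h7.add h8)),
    pds_add (f := fun y => T1 y + T2 y) (g := fun y => T3 y + T4 y) (h1.add h2) (h3.add h4), pds_add (f := fun y => T5 y + T6 y) (g := fun y => T7 y + T8 y) (h5.add h6) (h7.add h8),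
    pds_add h1 h2, pds_add h3 h4, pds_add h5 h6, pds_add h7 h8]
  ring

lemma pds_eventually_zero {f : E2 → ℝ} {x : E2} (h : ∀ᶠ y in nhds x, f y = 0) (j : Fin 2) :
    Cliff.pds j f x = 0 := by
  have h' : f =ᶠ[nhds x] (fun _ => 0) := h
  rw [Cliff.pds, h'.fderiv_eq, fderiv_const_apply]
  simp

end DiracCalc2
section DiracComp

lemma pd_comp (u : E2 → Cl 2) {x : E2} (hu : DifferentiableAt ℝ u x) (j : Fin 2)
    (A : Finset (Fin 2)) :
    Cliff.pd j u x A = Cliff.pds j (fun y => u y A) x := by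
  have h2 := ((ContinuousLinearMap.proj (R := ℝ) (φ := fun _ : Finset (Fin 2) => ℝ)
    A).hasFDerivAt (x := u x)).comp x hu.hasFDerivAt
  have h2' : HasFDerivAt (fun y => u y A)
      ((ContinuousLinearMap.proj (R := ℝ) (φ := fun _ : Finset (Fin 2) => ℝ) A).comp
        (fderiv ℝ u x)) x := h2
  rw [Cliff.pds, h2'.fderiv]
  rfl

lemma lap_eq (φ : E2 → ℝ) (x : E2) :
    Cliff.lap φ x = Cliff.pds 0 (fun y => Cliff.pds 0 φ y) x
      + Cliff.pds 1 (fun y => Cliff.pds 1 φ y) x := by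
  rw [Cliff.lap, Fin.sum_univ_two]

lemma dgrad_apply (φ : E2 → ℝ) (x : E2) (A : Finset (Fin 2)) :
    Cliff.Dgrad φ x A = Cliff.pds 0 φ x * Cliff.e (0 : Fin 2) A
      + Cliff.pds 1 φ x * Cliff.e (1 : Fin 2) A := by
  rw [Cliff.Dgrad, vec_apply]

lemma dirac_apply (u : E2 → Cl 2) (x : E2) (A : Finset (Fin 2)) :
    Cliff.Dirac u x A = Cliff.cmul (Cliff.e 0) (Cliff.pd 0 u x) A
      + Cliff.cmul (Cliff.e 1) (Cliff.pd 1 u x) A := by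
  rw [Cliff.Dirac, Fin.sum_univ_two]
  rfl

lemma delta_apply (φ : E2 → ℝ) (u : E2 → Cl 2) (x : E2) (A : Finset (Fin 2)) :
    Cliff.delta φ u x A = Cliff.Dirac u x A - Cliff.cmul (Cliff.Dgrad φ x) (u x) A := rfl

lemma normSq_delta (φ : E2 → ℝ) (u : E2 → Cl 2) {x : E2} (hu : DifferentiableAt ℝ u x) :
    Cliff.normSq (Cliff.delta φ u x) =
      (-(Cliff.pds 0 (fun y => u y {0}) x) - Cliff.pds 1 (fun y => u y {1}) x
        + Cliff.pds 0 φ x * u x {0} + Cliff.pds 1 φ x * u x {1}) ^ 2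
      + (Cliff.pds 0 (fun y => u y ∅) x + Cliff.pds 1 (fun y => u y {0,1}) x
        - Cliff.pds 0 φ x * u x ∅ - Cliff.pds 1 φ x * u x {0,1}) ^ 2
      + (-(Cliff.pds 0 (fun y => u y {0,1}) x) + Cliff.pds 1 (fun y => u y ∅) x
        + Cliff.pds 0 φ x * u x {0,1} - Cliff.pds 1 φ x * u x ∅) ^ 2
      + (Cliff.pds 0 (fun y => u y {1}) x - Cliff.pds 1 (fun y => u y {0}) x
        - Cliff.pds 0 φ x * u x {1} + Cliff.pds 1 φ x * u x {0}) ^ 2 := by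
  rw [normSq_eq]
  rw [delta_apply, delta_apply, delta_apply, delta_apply]
  rw [dirac_apply, dirac_apply, dirac_apply, dirac_apply]
  rw [cmul_c0, cmul_c1, cmul_c2, cmul_c3, cmul_c0, cmul_c1, cmul_c2, cmul_c3,
    cmul_c0, cmul_c1, cmul_c2, cmul_c3]
  rw [dgrad_apply, dgrad_apply, dgrad_apply, dgrad_apply]
  rw [e0_c0, e0_c1, e0_c2, e0_c3, e1_c0, e1_c1, e1_c2, e1_c3]
  rw [pd_comp u hu 0 ∅, pd_comp u hu 0 {0}, pd_comp u hu 0 {1}, pd_comp u hu 0 {0,1},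
    pd_comp u hu 1 ∅, pd_comp u hu 1 {0}, pd_comp u hu 1 {1}, pd_comp u hu 1 {0,1}]
  ring

lemma normSq_apply (u : E2 → Cl 2) (x : E2) :
    Cliff.normSq (u x) = u x ∅ ^ 2 + u x {0} ^ 2 + u x {1} ^ 2 + u x {0,1} ^ 2 :=
  normSq_eq _

end DiracComp

section DiracCore

theorem core_ineq (Φ : E2 → ℝ) (hΦ : ContDiff ℝ 2 Φ)
    (u : E2 → Cl 2) (hu : ContDiff ℝ (⊤ : ℕ∞) u) (hcs : HasCompactSupport u) :
    (∫ x, Cliff.lap Φ x * Cliff.normSq (u x) * Real.exp (-Φ x)) ≤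
      ∫ x, Cliff.normSq (Cliff.delta Φ u x) * Real.exp (-Φ x) := by
  have hcomp : ∀ A : Finset (Fin 2), ContDiff ℝ 3 fun y => u y A := fun A =>
    (ContinuousLinearMap.proj (R := ℝ) (φ := fun _ : Finset (Fin 2) => ℝ) A).contDiff.comp
      (hu.of_le (by rw [show ((3 : WithTop ℕ∞)) = ((3 : ℕ∞) : WithTop ℕ∞) from rfl]; exact WithTop.coe_le_coe.2 le_top))
  have hd : ∀ A : Finset (Fin 2), Differentiable ℝ fun y => u y A := fun A =>
    (hcomp A).differentiable (by norm_num)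
  have hderd : ∀ (j : Fin 2) (A : Finset (Fin 2)),
      Differentiable ℝ fun y => Cliff.pds j (fun z => u z A) y := fun j A =>
    (contDiff_pds (n := 3) (m := 1) (hcomp A) (by norm_num) j).differentiable (by norm_num)
  have hΦd : Differentiable ℝ Φ := hΦ.differentiable (by norm_num)
  have hPd : ∀ j : Fin 2, Differentiable ℝ fun y => Cliff.pds j Φ y := fun j =>
    (contDiff_pds (n := 2) (m := 1) hΦ (by norm_num) j).differentiable (by norm_num)
  have hXd : Differentiable ℝ fun y => Real.exp (-Φ y) :=
    (Real.contDiff_exp.comp (hΦ.neg)).differentiable (by norm_num)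
  have hud : Differentiable ℝ u := hu.differentiable (by simp)
  set W1 : E2 → ℝ := fun y => (((-1 : ℝ) * (u y ∅ * u y ∅ * Cliff.pds 0 Φ y * Real.exp (-Φ y)) + (-1 : ℝ) * (u y {0} * u y {0} * Cliff.pds 0 Φ y * Real.exp (-Φ y))) + ((-1 : ℝ) * (u y {1} * u y {1} * Cliff.pds 0 Φ y * Real.exp (-Φ y)) + (-1 : ℝ) * (u y {0,1} * u y {0,1} * Cliff.pds 0 Φ y * Real.exp (-Φ y)))) + (((2 : ℝ) * (u y ∅ * Cliff.pds 1 (fun z => u z {0,1}) y * Real.exp (-Φ y)) + (-2 : ℝ) * (Cliff.pds 1 (fun z => u z ∅) y * u y {0,1} * Real.exp (-Φ y))) + ((2 : ℝ) * (u y {0} * Cliff.pds 1 (fun z => u z {1}) y * Real.exp (-Φ y)) + (-2 : ℝ) * (Cliff.pds 1 (fun z => u z {0}) y * u y {1} * Real.exp (-Φ y)))) with hW1def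
  set W2 : E2 → ℝ := fun y => (((-1 : ℝ) * (u y ∅ * u y ∅ * Cliff.pds 1 Φ y * Real.exp (-Φ y)) + (-1 : ℝ) * (u y {0} * u y {0} * Cliff.pds 1 Φ y * Real.exp (-Φ y))) + ((-1 : ℝ) * (u y {1} * u y {1} * Cliff.pds 1 Φ y * Real.exp (-Φ y)) + (-1 : ℝ) * (u y {0,1} * u y {0,1} * Cliff.pds 1 Φ y * Real.exp (-Φ y)))) + (((-2 : ℝ) * (u y ∅ * Cliff.pds 0 (fun z => u z {0,1}) y * Real.exp (-Φ y)) + (2 : ℝ) * (Cliff.pds 0 (fun z => u z ∅) y * u y {0,1} * Real.exp (-Φ y))) + ((-2 : ℝ) * (u y {0} * Cliff.pds 0 (fun z => u z {1}) y * Real.exp (-Φ y)) + (2 : ℝ) * (Cliff.pds 0 (fun z => u z {0}) y * u y {1} * Real.exp (-Φ y)))) with hW2def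
  have key : ∀ x : E2, Cliff.normSq (Cliff.delta Φ u x) * Real.exp (-Φ x)
      = Cliff.lap Φ x * Cliff.normSq (u x) * Real.exp (-Φ x)
        + (((Cliff.pds 0 (fun z => u z {0}) x - Cliff.pds 1 (fun z => u z {1}) x) ^ 2 + (Cliff.pds 0 (fun z => u z {1}) x + Cliff.pds 1 (fun z => u z {0}) x) ^ 2 + (Cliff.pds 0 (fun z => u z ∅) x - Cliff.pds 1 (fun z => u z {0,1}) x) ^ 2 + (Cliff.pds 0 (fun z => u z {0,1}) x + Cliff.pds 1 (fun z => u z ∅) x) ^ 2) * Real.exp (-Φ x)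
        + (Cliff.pds 0 W1 x + Cliff.pds 1 W2 x)) := by
    intro x
    rw [normSq_delta Φ u (hud x), normSq_apply, lap_eq, hW1def, hW2def]
    rw [pds_add8 ((differentiable_const ((-1 : ℝ))).fun_mul ((((hd ∅).fun_mul (hd ∅)).fun_mul (hPd 0)).fun_mul hXd)) ((differentiable_const ((-1 : ℝ))).fun_mul ((((hd {0}).fun_mul (hd {0})).fun_mul (hPd 0)).fun_mul hXd)) ((differentiable_const ((-1 : ℝ))).fun_mul ((((hd {1}).fun_mul (hd {1})).fun_mul (hPd 0)).fun_mul hXd)) ((differentiable_const ((-1 : ℝ))).fun_mul ((((hd {0,1}).fun_mul (hd {0,1})).fun_mul (hPd 0)).fun_mul hXd)) ((differentiable_const ((2 : ℝ))).fun_mul (((hd ∅).fun_mul (hderd 1 {0,1})).fun_mul hXd)) ((differentiable_const ((-2 : ℝ))).fun_mul (((hderd 1 ∅).fun_mul (hd {0,1})).fun_mul hXd)) ((differentiable_const ((2 : ℝ))).fun_mul (((hd {0}).fun_mul (hderd 1 {1})).fun_mul hXd)) ((differentiable_const ((-2 : ℝ))).fun_mul (((hderd 1 {0}).fun_mul (hd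 {1})).fun_mul hXd)) 0 x]
    rw [pds_add8 ((differentiable_const ((-1 : ℝ))).fun_mul ((((hd ∅).fun_mul (hd ∅)).fun_mul (hPd 1)).fun_mul hXd)) ((differentiable_const ((-1 : ℝ))).fun_mul ((((hd {0}).fun_mul (hd {0})).fun_mul (hPd 1)).fun_mul hXd)) ((differentiable_const ((-1 : ℝ))).fun_mul ((((hd {1}).fun_mul (hd {1})).fun_mul (hPd 1)).fun_mul hXd)) ((differentiable_const ((-1 : ℝ))).fun_mul ((((hd {0,1}).fun_mul (hd {0,1})).fun_mul (hPd 1)).fun_mul hXd)) ((differentiable_const ((-2 : ℝ))).fun_mul (((hd ∅).fun_mul (hderd 0 {0,1})).fun_mul hXd)) ((differentiable_const ((2 : ℝ))).fun_mul (((hderd 0 ∅).fun_mul (hd {0,1})).fun_mul hXd)) ((differentiable_const ((-2 : ℝ))).fun_mul (((hd {0}).fun_mul (hderd 0 {1})).fun_mul hXd)) ((differentiable_const ((2 : ℝ))).fun_mul (((hderd 0 {0}).fun_mul (hd {1})).fun_mul hXd)) 1 x]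
    rw [pds_cmul4 (-1 : ℝ) (hd ∅) (hd ∅) (hPd 0) hXd 0 x, pds_cmul4 (-1 : ℝ) (hd {0}) (hd {0}) (hPd 0) hXd 0 x, pds_cmul4 (-1 : ℝ) (hd {1}) (hd {1}) (hPd 0) hXd 0 x, pds_cmul4 (-1 : ℝ) (hd {0,1}) (hd {0,1}) (hPd 0) hXd 0 x, pds_cmul3 (2 : ℝ) (hd ∅) (hderd 1 {0,1}) hXd 0 x, pds_cmul3 (-2 : ℝ) (hderd 1 ∅) (hd {0,1}) hXd 0 x, pds_cmul3 (2 : ℝ) (hd {0}) (hderd 1 {1}) hXd 0 x, pds_cmul3 (-2 : ℝ) (hderd 1 {0}) (hd {1}) hXd 0 x]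
    rw [pds_cmul4 (-1 : ℝ) (hd ∅) (hd ∅) (hPd 1) hXd 1 x, pds_cmul4 (-1 : ℝ) (hd {0}) (hd {0}) (hPd 1) hXd 1 x, pds_cmul4 (-1 : ℝ) (hd {1}) (hd {1}) (hPd 1) hXd 1 x, pds_cmul4 (-1 : ℝ) (hd {0,1}) (hd {0,1}) (hPd 1) hXd 1 x, pds_cmul3 (-2 : ℝ) (hd ∅) (hderd 0 {0,1}) hXd 1 x, pds_cmul3 (2 : ℝ) (hderd 0 ∅) (hd {0,1}) hXd 1 x, pds_cmul3 (-2 : ℝ) (hd {0}) (hderd 0 {1}) hXd 1 x, pds_cmul3 (2 : ℝ) (hderd 0 {0}) (hd {1}) hXd 1 x]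
    rw [pds_exp_neg hΦd 0 x, pds_exp_neg hΦd 1 x]
    rw [pds_swap (hcomp ∅) 1 0 x, pds_swap (hcomp {0}) 1 0 x, pds_swap (hcomp {1}) 1 0 x, pds_swap (hcomp {0,1}) 1 0 x]
    ring
  -- vanishing off the support of u
  have hv : ∀ x, x ∉ tsupport u → ∀ A : Finset (Fin 2), u x A = 0 := by
    intro x hx A
    rw [image_eq_zero_of_notMem_tsupport hx]; rfl
  have hz : ∀ x, x ∉ tsupport u → ∀ (j : Fin 2) (A : Finset (Fin 2)),
      Cliff.pds j (fun z => u z A) x = 0 := by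
    intro x hx j A
    refine pds_eventually_zero ?_ j
    filter_upwards [notMem_tsupport_iff_eventuallyEq.mp hx] with y hy
    simpa using congrFun hy A
  -- continuity facts
  have hcd : ∀ A : Finset (Fin 2), Continuous fun y => u y A := fun A => (hd A).continuous
  have hcdd : ∀ (j : Fin 2) (A : Finset (Fin 2)),
      Continuous fun y => Cliff.pds j (fun z => u z A) y := fun j A => (hderd j A).continuous
  have hcP : ∀ j : Fin 2, Continuous fun y => Cliff.pds j Φ y := fun j => (hPd j).continuous
  have hcX : Continuous fun y => Real.exp (-Φ y) := hXd.continuous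
  have hcS : ∀ j : Fin 2, Continuous fun y => Cliff.pds j (fun z => Cliff.pds j Φ z) y := fun j =>
    (contDiff_pds (n := 1) (m := 0) (contDiff_pds (n := 2) (m := 1) hΦ (by norm_num) j)
      (by norm_num) j).continuous
  have hc1 : ∀ A : Finset (Fin 2), ContDiff ℝ 1 fun y => u y A := fun A =>
    (hcomp A).of_le (by norm_num)
  have hd1 : ∀ (j : Fin 2) (A : Finset (Fin 2)),
      ContDiff ℝ 1 fun y => Cliff.pds j (fun z => u z A) y := fun j A =>
    contDiff_pds (n := 3) (m := 1) (hcomp A) (by norm_num) j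
  have hP1 : ∀ j : Fin 2, ContDiff ℝ 1 fun y => Cliff.pds j Φ y := fun j =>
    contDiff_pds (n := 2) (m := 1) hΦ (by norm_num) j
  have hX1 : ContDiff ℝ 1 fun y => Real.exp (-Φ y) :=
    (Real.contDiff_exp.comp hΦ.neg).of_le (by norm_num)
  -- integrability of the main pieces
  have hIG : Integrable (fun x => Cliff.lap Φ x * Cliff.normSq (u x) * Real.exp (-Φ x)) := by
    have hGrw : (fun x => Cliff.lap Φ x * Cliff.normSq (u x) * Real.exp (-Φ x))
        = fun x => (Cliff.pds 0 (fun z => Cliff.pds 0 Φ z) x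
            + Cliff.pds 1 (fun z => Cliff.pds 1 Φ z) x)
          * (u x ∅ ^ 2 + u x {0} ^ 2 + u x {1} ^ 2 + u x {0,1} ^ 2) * Real.exp (-Φ x) := by
      funext x; rw [lap_eq, normSq_apply]
    rw [hGrw]
    refine Continuous.integrable_of_hasCompactSupport ((((hcS 0).add (hcS 1)).mul (((((hcd ∅).pow 2).add ((hcd {0}).pow 2)).add ((hcd {1}).pow 2)).add ((hcd {0,1}).pow 2))).mul hcX) ?_
    refine HasCompactSupport.intro hcs fun x hx => ?_
    simp [hv x hx]
  have hIF : Integrable (fun x => Cliff.normSq (Cliff.delta Φ u x) * Real.exp (-Φ x)) := by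
    have hFrw : (fun x => Cliff.normSq (Cliff.delta Φ u x) * Real.exp (-Φ x))
        = fun x => ((-(Cliff.pds 0 (fun z => u z {0}) x) - Cliff.pds 1 (fun z => u z {1}) x
              + Cliff.pds 0 Φ x * u x {0} + Cliff.pds 1 Φ x * u x {1}) ^ 2
            + (Cliff.pds 0 (fun z => u z ∅) x + Cliff.pds 1 (fun z => u z {0,1}) x
              - Cliff.pds 0 Φ x * u x ∅ - Cliff.pds 1 Φ x * u x {0,1}) ^ 2
            + (-(Cliff.pds 0 (fun z => u z {0,1}) x) + Cliff.pds 1 (fun z => u z ∅) x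
              + Cliff.pds 0 Φ x * u x {0,1} - Cliff.pds 1 Φ x * u x ∅) ^ 2
            + (Cliff.pds 0 (fun z => u z {1}) x - Cliff.pds 1 (fun z => u z {0}) x
              - Cliff.pds 0 Φ x * u x {1} + Cliff.pds 1 Φ x * u x {0}) ^ 2)
          * Real.exp (-Φ x) := by
      funext x
      rw [normSq_delta Φ u (hud x)]
    rw [hFrw]
    refine Continuous.integrable_of_hasCompactSupport ((((((((((hcdd 0 {0}).neg.sub (hcdd 1 {1})).add ((hcP 0).mul (hcd {0}))).add ((hcP 1).mul (hcd {1}))).pow 2).add (((((hcdd 0 ∅).add (hcdd 1 {0,1})).sub ((hcP 0).mul (hcd ∅))).sub ((hcP 1).mul (hcd {0,1}))).pow 2)).add (((((hcdd 0 {0,1}).neg.add (hcdd 1 ∅)).add ((hcP 0).mul (hcd {0,1}))).sub ((hcP 1).mul (hcd ∅))).pow 2)).add (((((hcdd 0 {1}).sub (hcdd 1 {0})).sub ((hcP 0).mul (hcd {1}))).add ((hcP 1).mul (hcd {0}))).pow 2)).mul hcX)) ?_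
    refine HasCompactSupport.intro hcs fun x hx => ?_
    simp [hv x hx, hz x hx]
  have hIQ : Integrable (fun x => ((Cliff.pds 0 (fun z => u z {0}) x - Cliff.pds 1 (fun z => u z {1}) x) ^ 2 + (Cliff.pds 0 (fun z => u z {1}) x + Cliff.pds 1 (fun z => u z {0}) x) ^ 2 + (Cliff.pds 0 (fun z => u z ∅) x - Cliff.pds 1 (fun z => u z {0,1}) x) ^ 2 + (Cliff.pds 0 (fun z => u z {0,1}) x + Cliff.pds 1 (fun z => u z ∅) x) ^ 2) * Real.exp (-Φ x)) := by
    refine Continuous.integrable_of_hasCompactSupport ((((((((hcdd 0 {0}).sub (hcdd 1 {1})).pow 2).add (((hcdd 0 {1}).add (hcdd 1 {0})).pow 2)).add (((hcdd 0 ∅).sub (hcdd 1 {0,1})).pow 2)).add (((hcdd 0 {0,1}).add (hcdd 1 ∅)).pow 2)).mul hcX)) ?_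
    refine HasCompactSupport.intro hcs fun x hx => ?_
    simp [hz x hx]
  -- the W pieces
  have hW1c : ContDiff ℝ 1 W1 := by rw [hW1def]; exact ((((contDiff_const.mul ((((hc1 ∅).mul (hc1 ∅)).mul (hP1 0)).mul hX1)).add (contDiff_const.mul ((((hc1 {0}).mul (hc1 {0})).mul (hP1 0)).mul hX1))).add ((contDiff_const.mul ((((hc1 {1}).mul (hc1 {1})).mul (hP1 0)).mul hX1)).add (contDiff_const.mul ((((hc1 {0,1}).mul (hc1 {0,1})).mul (hP1 0)).mul hX1)))).add (((contDiff_const.mul (((hc1 ∅).mul (hd1 1 {0,1})).mul hX1)).add (contDiff_const.mul (((hd1 1 ∅).mul (hc1 {0,1})).mul hX1))).add ((contDiff_const.mul (((hc1 {0}).mul (hd1 1 {1})).mul hX1)).add (contDiff_const.mul (((hd1 1 {0}).mul (hc1 {1})).mul hX1)))))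
  have hW2c : ContDiff ℝ 1 W2 := by rw [hW2def]; exact ((((contDiff_const.mul ((((hc1 ∅).mul (hc1 ∅)).mul (hP1 1)).mul hX1)).add (contDiff_const.mul ((((hc1 {0}).mul (hc1 {0})).mul (hP1 1)).mul hX1))).add ((contDiff_const.mul ((((hc1 {1}).mul (hc1 {1})).mul (hP1 1)).mul hX1)).add (contDiff_const.mul ((((hc1 {0,1}).mul (hc1 {0,1})).mul (hP1 1)).mul hX1)))).add (((contDiff_const.mul (((hc1 ∅).mul (hd1 0 {0,1})).mul hX1)).add (contDiff_const.mul (((hd1 0 ∅).mul (hc1 {0,1})).mul hX1))).add ((contDiff_const.mul (((hc1 {0}).mul (hd1 0 {1})).mul hX1)).add (contDiff_const.mul (((hd1 0 {0}).mul (hc1 {1})).mul hX1)))))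
  have hW1cs : HasCompactSupport W1 := by
    refine HasCompactSupport.intro hcs fun x hx => ?_
    rw [hW1def]; simp [hv x hx]
  have hW2cs : HasCompactSupport W2 := by
    refine HasCompactSupport.intro hcs fun x hx => ?_
    rw [hW2def]; simp [hv x hx]
  have hIW1 : Integrable (fun x => Cliff.pds 0 W1 x) := by
    refine Continuous.integrable_of_hasCompactSupport
      (contDiff_pds (n := 1) (m := 0) hW1c (by norm_num) 0).continuous ?_
    refine HasCompactSupport.intro hW1cs fun x hx => ?_
    refine pds_eventually_zero ?_ 0
    filter_upwards [notMem_tsupport_iff_eventuallyEq.mp hx] with y hy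
    simpa using hy
  have hIW2 : Integrable (fun x => Cliff.pds 1 W2 x) := by
    refine Continuous.integrable_of_hasCompactSupport
      (contDiff_pds (n := 1) (m := 0) hW2c (by norm_num) 1).continuous ?_
    refine HasCompactSupport.intro hW2cs fun x hx => ?_
    refine pds_eventually_zero ?_ 1
    filter_upwards [notMem_tsupport_iff_eventuallyEq.mp hx] with y hy
    simpa using hy
  -- integration by parts: the divergence terms vanish
  have hzero : ∀ (j : Fin 2) (W : E2 → ℝ), ContDiff ℝ 1 W → HasCompactSupport W →
      Integrable (fun x => Cliff.pds j W x) → (∫ x, Cliff.pds j W x) = 0 := by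
    intro j W hWc hWcs hIW
    have h2 : Integrable (fun x =>
        fderiv ℝ (fun _ : E2 => (1 : ℝ)) x (Pi.single j 1) * W x) (volume : Measure E2) := by
      have : (fun x => fderiv ℝ (fun _ : E2 => (1 : ℝ)) x (Pi.single j 1) * W x)
          = fun _ => (0 : ℝ) := by
        funext x; simp [fderiv_const_apply]
      rw [this]; exact integrable_zero _ _ _
    have h1 : Integrable (fun x => (1 : ℝ) * fderiv ℝ W x (Pi.single j 1))
        (volume : Measure E2) := by
      simpa [Cliff.pds] using hIW
    have h3 : Integrable (fun x => (1 : ℝ) * W x) (volume : Measure E2) := by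
      simpa using hWc.continuous.integrable_of_hasCompactSupport hWcs
    have hibp := integral_mul_fderiv_eq_neg_fderiv_mul_of_integrable h2 h1 h3
      (fun x _ => (differentiable_const (1 : ℝ)) x) (fun x _ => (hWc.differentiable (by norm_num)) x)
    show (∫ x, fderiv ℝ W x (Pi.single j 1)) = 0
    simpa [fderiv_const_apply] using hibp
  have hz1 : (∫ x, Cliff.pds 0 W1 x) = 0 := hzero 0 W1 hW1c hW1cs hIW1
  have hz2 : (∫ x, Cliff.pds 1 W2 x) = 0 := hzero 1 W2 hW2c hW2cs hIW2
  -- assembling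
  have hsplit : (∫ x, Cliff.normSq (Cliff.delta Φ u x) * Real.exp (-Φ x))
      = (∫ x, Cliff.lap Φ x * Cliff.normSq (u x) * Real.exp (-Φ x))
        + ((∫ x, ((Cliff.pds 0 (fun z => u z {0}) x - Cliff.pds 1 (fun z => u z {1}) x) ^ 2 + (Cliff.pds 0 (fun z => u z {1}) x + Cliff.pds 1 (fun z => u z {0}) x) ^ 2 + (Cliff.pds 0 (fun z => u z ∅) x - Cliff.pds 1 (fun z => u z {0,1}) x) ^ 2 + (Cliff.pds 0 (fun z => u z {0,1}) x + Cliff.pds 1 (fun z => u z ∅) x) ^ 2) * Real.exp (-Φ x))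
          + ((∫ x, Cliff.pds 0 W1 x) + ∫ x, Cliff.pds 1 W2 x)) := by
    rw [show (fun x => Cliff.normSq (Cliff.delta Φ u x) * Real.exp (-Φ x))
        = fun x => Cliff.lap Φ x * Cliff.normSq (u x) * Real.exp (-Φ x)
          + (((Cliff.pds 0 (fun z => u z {0}) x - Cliff.pds 1 (fun z => u z {1}) x) ^ 2 + (Cliff.pds 0 (fun z => u z {1}) x + Cliff.pds 1 (fun z => u z {0}) x) ^ 2 + (Cliff.pds 0 (fun z => u z ∅) x - Cliff.pds 1 (fun z => u z {0,1}) x) ^ 2 + (Cliff.pds 0 (fun z => u z {0,1}) x + Cliff.pds 1 (fun z => u z ∅) x) ^ 2) * Real.exp (-Φ x)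
          + (Cliff.pds 0 W1 x + Cliff.pds 1 W2 x)) from funext key]
    have hIr2 : Integrable (fun x => Cliff.pds 0 W1 x + Cliff.pds 1 W2 x) :=
      hIW1.add hIW2
    have hIr1 : Integrable (fun x => ((Cliff.pds 0 (fun z => u z {0}) x - Cliff.pds 1 (fun z => u z {1}) x) ^ 2 + (Cliff.pds 0 (fun z => u z {1}) x + Cliff.pds 1 (fun z => u z {0}) x) ^ 2 + (Cliff.pds 0 (fun z => u z ∅) x - Cliff.pds 1 (fun z => u z {0,1}) x) ^ 2 + (Cliff.pds 0 (fun z => u z {0,1}) x + Cliff.pds 1 (fun z => u z ∅) x) ^ 2) * Real.exp (-Φ x)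
        + (Cliff.pds 0 W1 x + Cliff.pds 1 W2 x)) := hIQ.add hIr2
    rw [integral_add hIG hIr1, integral_add hIQ hIr2, integral_add hIW1 hIW2]
  have hQpos : 0 ≤ ∫ x, ((Cliff.pds 0 (fun z => u z {0}) x - Cliff.pds 1 (fun z => u z {1}) x) ^ 2 + (Cliff.pds 0 (fun z => u z {1}) x + Cliff.pds 1 (fun z => u z {0}) x) ^ 2 + (Cliff.pds 0 (fun z => u z ∅) x - Cliff.pds 1 (fun z => u z {0,1}) x) ^ 2 + (Cliff.pds 0 (fun z => u z {0,1}) x + Cliff.pds 1 (fun z => u z ∅) x) ^ 2) * Real.exp (-Φ x) :=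
    integral_nonneg fun x => by positivity
  rw [hsplit, hz1, hz2]
  linarith

end DiracCore
lemma pds_congr_nhds {f g : E2 → ℝ} {x : E2} (h : f =ᶠ[nhds x] g) (j : Fin 2) :
    Cliff.pds j f x = Cliff.pds j g x := by
  unfold Cliff.pds
  rw [h.fderiv_eq]

open scoped Manifold

/-- in dimension 2, for subharmonic `φ`,
`‖Du − (Dφ)u‖²_φ ≥ ∫_Ω (Δφ) |u|² e^{−φ} dV` for every test function `u`. -/
theorem dirac_apriori_dim2 (Ω : Set (Fin 2 → ℝ)) (hΩ : Cliff.IsDomain Ω)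
    (φ : (Fin 2 → ℝ) → ℝ) (hφ : ContDiffOn ℝ 2 φ Ω)
    (hsub : ∀ x ∈ Ω, 0 ≤ Cliff.lap φ x)
    (u : (Fin 2 → ℝ) → Cl 2) (hu : Cliff.IsTest Ω u) :
    (∫ x in Ω, Cliff.lap φ x * Cliff.normSq (u x) * Real.exp (-φ x)) ≤
      Cliff.wnorm Ω φ (Cliff.delta φ u) := by
  classical
  obtain ⟨hus, hcs, hsup⟩ := hu
  -- a smooth cutoff which is 1 near the support of u and 0 near the complement of Ω
  have hdisj : Disjoint Ωᶜ (tsupport u) :=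
    Set.disjoint_left.mpr fun x hx hxK => hx (hsup hxK)
  obtain ⟨ψ, h0, h1, -⟩ := exists_contMDiffMap_zero_one_nhds_of_isClosed (I := 𝓘(ℝ, E2)) (n := (⊤ : ℕ∞))
    hΩ.1.isClosed_compl (isClosed_tsupport u) hdisj
  have hψ2 : ContDiff ℝ 2 (⇑ψ) :=
    (contMDiff_iff_contDiff.mp ψ.contMDiff).of_le
      (by rw [show ((2 : WithTop ℕ∞)) = ((2 : ℕ∞) : WithTop ℕ∞) from rfl]
          exact WithTop.coe_le_coe.2 le_top)
  obtain ⟨U1, hU1o, hKU1, hU1ψ⟩ := eventually_nhdsSet_iff_exists.mp h1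
  obtain ⟨V, hVo, hVΩc, hVψ⟩ := eventually_nhdsSet_iff_exists.mp h0
  set Φ : E2 → ℝ := fun x => if x ∈ Ω then ψ x * φ x else 0 with hΦdef
  have hUo : IsOpen (U1 ∩ Ω) := hU1o.inter hΩ.1
  have hKU : tsupport u ⊆ U1 ∩ Ω := fun x hx => ⟨hKU1 hx, hsup hx⟩
  have hΦeq : ∀ y ∈ U1 ∩ Ω, Φ y = φ y := by
    intro y hy
    rw [hΦdef]
    simp only [if_pos hy.2, hU1ψ y hy.1, one_mul]
  have hΦ2 : ContDiff ℝ 2 Φ := by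
    rw [contDiff_iff_contDiffAt]
    intro x
    by_cases hx : x ∈ Ω
    · have hmul : ContDiffAt ℝ 2 (fun y => ψ y * φ y) x :=
        hψ2.contDiffAt.mul (hφ.contDiffAt (hΩ.1.mem_nhds hx))
      refine hmul.congr_of_eventuallyEq ?_
      filter_upwards [hΩ.1.mem_nhds hx] with y hy
      rw [hΦdef]
      simp only [if_pos hy]
    · have hxV : x ∈ V := hVΩc hx
      refine (contDiffAt_const (c := (0 : ℝ))).congr_of_eventuallyEq ?_
      filter_upwards [hVo.mem_nhds hxV] with y hy
      rw [hΦdef]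
      by_cases hyΩ : y ∈ Ω
      · simp only [if_pos hyΩ, hVψ y hy, zero_mul]
      · simp only [if_neg hyΩ]
  -- derivative transfers on U1 ∩ Ω
  have hΦφ : ∀ x ∈ U1 ∩ Ω, Φ =ᶠ[nhds x] φ := fun x hx =>
    Filter.eventually_of_mem (hUo.mem_nhds hx) hΦeq
  have hpds : ∀ (j : Fin 2), ∀ x ∈ U1 ∩ Ω, Cliff.pds j Φ x = Cliff.pds j φ x :=
    fun j x hx => pds_congr_nhds (hΦφ x hx) j
  have hlap : ∀ x ∈ U1 ∩ Ω, Cliff.lap Φ x = Cliff.lap φ x := by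
    intro x hx
    rw [lap_eq, lap_eq]
    have e0 : (fun y => Cliff.pds 0 Φ y) =ᶠ[nhds x] fun y => Cliff.pds 0 φ y := by
      filter_upwards [hUo.mem_nhds hx] with y hy
      exact hpds 0 y hy
    have e1 : (fun y => Cliff.pds 1 Φ y) =ᶠ[nhds x] fun y => Cliff.pds 1 φ y := by
      filter_upwards [hUo.mem_nhds hx] with y hy
      exact hpds 1 y hy
    rw [pds_congr_nhds e0 0, pds_congr_nhds e1 1]
  have hdelta : ∀ x ∈ U1 ∩ Ω, Cliff.delta Φ u x = Cliff.delta φ u x := by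
    intro x hx
    show Cliff.Dirac u x - Cliff.cmul (Cliff.Dgrad Φ x) (u x)
      = Cliff.Dirac u x - Cliff.cmul (Cliff.Dgrad φ x) (u x)
    have : Cliff.Dgrad Φ x = Cliff.Dgrad φ x := by
      rw [Cliff.Dgrad, Cliff.Dgrad]
      exact congrArg _ (funext fun j => hpds j x hx)
    rw [this]
  -- vanishing off the support of u
  have hud : Differentiable ℝ u := hus.differentiable
    (by simp)
  have hv : ∀ x, x ∉ tsupport u → ∀ A : Finset (Fin 2), u x A = 0 := by
    intro x hx A
    rw [image_eq_zero_of_notMem_tsupport hx]; rfl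
  have hz : ∀ x, x ∉ tsupport u → ∀ (j : Fin 2) (A : Finset (Fin 2)),
      Cliff.pds j (fun z => u z A) x = 0 := by
    intro x hx j A
    refine pds_eventually_zero ?_ j
    filter_upwards [notMem_tsupport_iff_eventuallyEq.mp hx] with y hy
    simpa using congrFun hy A
  have hMΩ : MeasurableSet Ω := hΩ.1.measurableSet
  -- transfer of the left-hand side
  have hL : (∫ x in Ω, Cliff.lap φ x * Cliff.normSq (u x) * Real.exp (-φ x))
      = ∫ x, Cliff.lap Φ x * Cliff.normSq (u x) * Real.exp (-Φ x) := by
    have hvan : ∀ x, x ∉ Ω → Cliff.lap Φ x * Cliff.normSq (u x) * Real.exp (-Φ x) = 0 := by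
      intro x hx
      have hxK : x ∉ tsupport u := fun h => hx (hsup h)
      rw [normSq_apply]
      simp [hv x hxK]
    rw [← setIntegral_eq_integral_of_forall_compl_eq_zero hvan]
    refine setIntegral_congr_fun hMΩ fun x hx => ?_
    by_cases hxK : x ∈ tsupport u
    · have hxU : x ∈ U1 ∩ Ω := hKU hxK
      rw [hlap x hxU, hΦeq x hxU]
    · rw [normSq_apply]
      simp [hv x hxK]
  -- transfer of the right-hand side
  have hR : Cliff.wnorm Ω φ (Cliff.delta φ u)
      = ∫ x, Cliff.normSq (Cliff.delta Φ u x) * Real.exp (-Φ x) := by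
    rw [Cliff.wnorm]
    have hvan : ∀ x, x ∉ Ω → Cliff.normSq (Cliff.delta Φ u x) * Real.exp (-Φ x) = 0 := by
      intro x hx
      have hxK : x ∉ tsupport u := fun h => hx (hsup h)
      rw [normSq_delta Φ u (hud x)]
      simp [hv x hxK, hz x hxK]
    rw [← setIntegral_eq_integral_of_forall_compl_eq_zero hvan]
    refine setIntegral_congr_fun hMΩ fun x hx => ?_
    by_cases hxK : x ∈ tsupport u
    · have hxU : x ∈ U1 ∩ Ω := hKU hxK
      rw [hdelta x hxU, hΦeq x hxU]
    · rw [normSq_delta Φ u (hud x), normSq_delta φ u (hud x)]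
      simp [hv x hxK, hz x hxK]
  rw [hL, hR]
  exact core_ineq Φ hΦ2 u hus hcs
end
end

section
/- Let n ≥ 3, Ω = ℝⁿ ∖ closure(B(0,1)), and φ = n log|x|. For m ∈ ℕ₊ set u_m(x) = |x|^{−1/m} (a scalar-valued function) and f_m(x) = −(1/m)|x|^{−1/m−2} x (a Clifford vector-valued function). Then: (i) Δφ = n(n−2)/|x|² on Ω; (ii) Du_m = f_m on Ω; (iii) ‖u_m‖²_φ = (m/2) σ_{n−1}; (iv) ∫_Ω (|f_m|²/Δφ) e^{−φ} dV = σ_{n−1}/(2 m n (n−2)); consequently ‖u_m‖²_φ / ∫_Ω (|f_m|²/Δφ) e^{−φ} dV = m² n (n−2), which tends to +∞ as m → ∞. -/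
open scoped BigOperators
open MeasureTheory

noncomputable section

namespace Cliff

variable {n : ℕ}

lemma cmul_cone (f : Cl n) : cmul f cone = f := by
  funext C
  rw [cmul, Finset.sum_eq_single C]
  · simp [cone, csign, symmDiff_self]
  · intro A _ hA
    have h : symmDiff A C ≠ ∅ := fun h => hA (by simpa [symmDiff_eq_bot] using h)
    simp [cone, h]
  · simp

lemma cmul_smul_right (c : ℝ) (f g : Cl n) : cmul f (c • g) = c • cmul f g := by
  funext C
  simp only [cmul, Pi.smul_apply, smul_eq_mul, Finset.mul_sum]
  exact Finset.sum_congr rfl fun A _ => by ring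

lemma cmul_e_scal (j : Fin n) (c : ℝ) : cmul (e j) (scal c) = c • e j := by
  rw [scal, cmul_smul_right, cmul_cone]

lemma normSq_scal (c : ℝ) : normSq (scal c : Cl n) = c ^ 2 := by
  simp [normSq, scal, cone, mul_ite, Finset.sum_ite_eq']

lemma normSq_smul (c : ℝ) (f : Cl n) : normSq (c • f) = c ^ 2 * normSq f := by
  simp [normSq, mul_pow, Finset.mul_sum]

lemma vec_apply (x : Fin n → ℝ) (A : Finset (Fin n)) :
    vec x A = ∑ j, x j * (if A = {j} then 1 else 0) := by
  simp [vec, e]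

lemma vec_singleton (x : Fin n → ℝ) (j : Fin n) : vec x {j} = x j := by
  rw [vec_apply, Finset.sum_eq_single j] <;> simp +contextual [Finset.singleton_inj, eq_comm]

lemma normSq_vec (x : Fin n → ℝ) : normSq (vec x) = ∑ j, x j ^ 2 := by
  rw [normSq, ← Finset.sum_subset
      (Finset.subset_univ (Finset.univ.image fun j : Fin n => ({j} : Finset (Fin n))))]
  · rw [Finset.sum_image (by simp [Finset.singleton_inj]; exact Finset.singleton_injective)]
    exact Finset.sum_congr rfl fun j _ => by rw [vec_singleton]
  · intro A _ hA
    have h : ∀ j, A ≠ {j} := by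
      intro j hj; exact hA (Finset.mem_image.2 ⟨j, Finset.mem_univ j, hj.symm⟩)
    rw [vec_apply]
    simp [h]

end Cliff
namespace Cliff

variable {n : ℕ}

def Q (x : Fin n → ℝ) : ℝ := ∑ j, x j ^ 2

lemma Q_nonneg (x : Fin n → ℝ) : 0 ≤ Q x := Finset.sum_nonneg fun j _ => sq_nonneg _

lemma nrm_eq_sqrt (x : Fin n → ℝ) : nrm x = Real.sqrt (Q x) := rfl

lemma nrm_pos {x : Fin n → ℝ} (hx : 1 < nrm x) : 0 < nrm x := lt_trans one_pos hx

lemma Q_pos {x : Fin n → ℝ} (hx : 1 < nrm x) : 0 < Q x := by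
  have := nrm_pos hx
  rw [nrm_eq_sqrt] at this
  exact (Real.sqrt_pos.mp this)

lemma nrm_sq (x : Fin n → ℝ) : nrm x ^ 2 = Q x := Real.sq_sqrt (Q_nonneg x)

lemma nrm_rpow (x : Fin n → ℝ) (a : ℝ) : nrm x ^ a = Q x ^ (a / 2) := by
  rw [nrm_eq_sqrt, Real.sqrt_eq_rpow, ← Real.rpow_mul (Q_nonneg x)]
  congr 1
  ring

def gradQ (x : Fin n → ℝ) : (Fin n → ℝ) →L[ℝ] ℝ :=
  ∑ j, (2 * x j) • ContinuousLinearMap.proj j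

lemma hasFDerivAt_Q (x : Fin n → ℝ) : HasFDerivAt Q (gradQ x) x := by
  have h : ∀ j : Fin n, HasFDerivAt (fun y : Fin n → ℝ => y j ^ 2)
      ((2 * x j) • ContinuousLinearMap.proj (R := ℝ) (φ := fun _ : Fin n => ℝ) j) x := by
    intro j
    have h1 : HasFDerivAt (fun y : Fin n → ℝ => y j)
        (ContinuousLinearMap.proj (R := ℝ) (φ := fun _ : Fin n => ℝ) j) x :=
      hasFDerivAt_apply j x
    have h2 := h1.mul h1
    have h3 : (fun y : Fin n → ℝ => y j ^ 2) = fun y => y j * y j := by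
      funext y; ring
    rw [h3]
    exact h2.congr_fderiv (by rw [two_mul, add_smul])
  exact HasFDerivAt.fun_sum fun j _ => h j

lemma gradQ_apply (x : Fin n → ℝ) (j : Fin n) : gradQ x (Pi.single j 1) = 2 * x j := by
  simp [gradQ, ContinuousLinearMap.sum_apply, Pi.single_apply, mul_ite,
    Finset.sum_ite_eq']

end Cliff
namespace Cliff

variable {n : ℕ}

lemma hasFDerivAt_Qrpow (x : Fin n → ℝ) (hx : Q x ≠ 0) (b : ℝ) :
    HasFDerivAt (fun y => Q y ^ b) ((b * Q x ^ (b - 1)) • gradQ x) x := by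
  have h1 : HasDerivAt (fun t : ℝ => t ^ b) (b * Q x ^ (b - 1)) (Q x) :=
    Real.hasDerivAt_rpow_const (Or.inl hx)
  exact h1.comp_hasFDerivAt x (hasFDerivAt_Q x)

lemma pds_Qrpow (j : Fin n) (x : Fin n → ℝ) (hx : Q x ≠ 0) (b : ℝ) :
    pds j (fun y => Q y ^ b) x = b * Q x ^ (b - 1) * (2 * x j) := by
  rw [pds, (hasFDerivAt_Qrpow x hx b).fderiv]
  simp [gradQ_apply]

lemma contQ : Continuous (Q : (Fin n → ℝ) → ℝ) :=
  continuous_finset_sum _ fun j _ => (continuous_apply j).pow 2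

lemma isOpen_U : IsOpen {y : Fin n → ℝ | 0 < Q y} := isOpen_lt continuous_const contQ

lemma phi_eventuallyEq {x : Fin n → ℝ} (hx : 0 < Q x) :
    (fun y => (n : ℝ) * Real.log (nrm y)) =ᶠ[nhds x]
      (fun y => ((n : ℝ) / 2) * Real.log (Q y)) := by
  filter_upwards [isOpen_U.mem_nhds hx] with y hy
  rw [nrm_eq_sqrt, Real.log_sqrt (le_of_lt hy)]
  ring

lemma hasFDerivAt_philike (x : Fin n → ℝ) (hx : 0 < Q x) :
    HasFDerivAt (fun y => ((n : ℝ) / 2) * Real.log (Q y))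
      ((((n : ℝ) / 2) * (Q x)⁻¹) • gradQ x) x := by
  have h1 : HasDerivAt Real.log (Q x)⁻¹ (Q x) := Real.hasDerivAt_log (ne_of_gt hx)
  have h2 := (h1.comp_hasFDerivAt x (hasFDerivAt_Q x)).const_mul ((n : ℝ) / 2)
  exact h2.congr_fderiv (by rw [smul_smul])

lemma pds_phi (j : Fin n) {x : Fin n → ℝ} (hx : 0 < Q x) :
    pds j (fun y => (n : ℝ) * Real.log (nrm y)) x = (n : ℝ) * x j * (Q x)⁻¹ := by
  rw [pds, (phi_eventuallyEq hx).fderiv_eq, (hasFDerivAt_philike x hx).fderiv]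
  simp only [ContinuousLinearMap.coe_smul', Pi.smul_apply, gradQ_apply, smul_eq_mul]
  ring

lemma pds_pds_phi (j : Fin n) {x : Fin n → ℝ} (hx : 0 < Q x) :
    pds j (pds j (fun y => (n : ℝ) * Real.log (nrm y))) x
      = (n : ℝ) * (Q x)⁻¹ - 2 * (n : ℝ) * x j ^ 2 * (Q x ^ 2)⁻¹ := by
  have hev : (pds j (fun y => (n : ℝ) * Real.log (nrm y))) =ᶠ[nhds x]
      (fun y => ((n : ℝ) * y j) * (Q y)⁻¹) := by
    filter_upwards [isOpen_U.mem_nhds hx] with y hy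
    rw [pds_phi j hy]
  rw [pds, hev.fderiv_eq]
  have h1 : HasFDerivAt (fun y : Fin n → ℝ => (n : ℝ) * y j)
      ((n : ℝ) • ContinuousLinearMap.proj (R := ℝ) (φ := fun _ : Fin n => ℝ) j) x :=
    (hasFDerivAt_apply j x).const_mul (n : ℝ)
  have h2 : HasFDerivAt (fun y : Fin n → ℝ => (Q y)⁻¹) ((-(Q x ^ 2)⁻¹) • gradQ x) x :=
    (hasDerivAt_inv (ne_of_gt hx)).comp_hasFDerivAt x (hasFDerivAt_Q x)
  have h3 := h1.mul h2
  rw [(show HasFDerivAt (fun y => (n : ℝ) * y j * (Q y)⁻¹) _ x from h3).fderiv]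
  simp only [ContinuousLinearMap.add_apply, ContinuousLinearMap.coe_smul', Pi.smul_apply,
    gradQ_apply, smul_eq_mul, ContinuousLinearMap.proj_apply, Pi.single_eq_same]
  ring

end Cliff
namespace Cliff

variable {n : ℕ}

lemma lap_phi {x : Fin n → ℝ} (hx : 0 < Q x) :
    lap (fun y => (n : ℝ) * Real.log (nrm y)) x = (n : ℝ) * ((n : ℝ) - 2) / Q x := by
  rw [lap, Finset.sum_congr rfl fun j _ => pds_pds_phi j hx, Finset.sum_sub_distrib,
    Finset.sum_const, Finset.card_univ, Fintype.card_fin]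
  have h2 : ∑ j : Fin n, 2 * (n : ℝ) * x j ^ 2 * (Q x ^ 2)⁻¹
      = 2 * (n : ℝ) * Q x * (Q x ^ 2)⁻¹ := by
    rw [Finset.sum_congr rfl fun j (_ : j ∈ Finset.univ) =>
      show 2 * (n : ℝ) * x j ^ 2 * (Q x ^ 2)⁻¹
        = x j ^ 2 * (2 * (n : ℝ) * (Q x ^ 2)⁻¹) by ring, ← Finset.sum_mul]
    rw [show Q x = ∑ j, x j ^ 2 from rfl]
    ring
  rw [h2]
  have hQ : Q x ≠ 0 := ne_of_gt hx
  simp only [nsmul_eq_mul]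
  field_simp

lemma dirac_u {m : ℕ} (hm : 0 < m) {x : Fin n → ℝ} (hx : 0 < Q x) :
    Dirac (fun y => scal (nrm y ^ (-(1 / (m : ℝ))))) x
      = (-(1 / (m : ℝ)) * nrm x ^ (-(1 / (m : ℝ)) - 2)) • vec x := by
  set a : ℝ := -(1 / (m : ℝ)) with ha
  have hfun : (fun y : Fin n → ℝ => scal (nrm y ^ a))
      = fun y => (Q y ^ (a / 2)) • (cone : Cl n) := by
    funext y; rw [scal, nrm_rpow]
  have hpd : ∀ j, pd j (fun y : Fin n → ℝ => scal (nrm y ^ a)) x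
      = ((a / 2) * Q x ^ (a / 2 - 1) * (2 * x j)) • (cone : Cl n) := by
    intro j
    rw [hfun, pd]
    have h := (hasFDerivAt_Qrpow x (ne_of_gt hx) (a / 2)).smul_const (cone : Cl n)
    rw [h.fderiv]
    simp [gradQ_apply]
  rw [Dirac, Finset.sum_congr rfl fun j _ => by
    rw [hpd j, cmul_smul_right, cmul_cone], vec, Finset.smul_sum]
  apply Finset.sum_congr rfl
  intro j _
  rw [smul_smul]
  congr 1
  rw [nrm_rpow, show (a - 2) / 2 = a / 2 - 1 by ring]
  ring

end Cliff
namespace Cliff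

variable {n : ℕ}

lemma cont_nrm : Continuous (nrm : (Fin n → ℝ) → ℝ) := Real.continuous_sqrt.comp contQ

lemma meas_Omega : MeasurableSet {x : Fin n → ℝ | 1 < nrm x} :=
  (isOpen_lt continuous_const cont_nrm).measurableSet

lemma master_integral (hn3 : 3 ≤ n) (t : ℝ) (ht : t + (n : ℝ) < 0) :
    ∫ x in {x : Fin n → ℝ | 1 < nrm x}, nrm x ^ t
      = ((n : ℝ) * (volume (Metric.ball (0 : EuclideanSpace ℝ (Fin n)) 1)).toReal)
        * (-1 / (t + (n : ℝ))) := by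
  haveI hne : Nonempty (Fin n) := ⟨⟨0, by omega⟩⟩
  haveI : Nontrivial (EuclideanSpace ℝ (Fin n)) := by infer_instance
  set g : ℝ → ℝ := Set.indicator (Set.Ioi 1) (fun r => r ^ t) with hg
  have h0 : ∫ x in {x : Fin n → ℝ | 1 < nrm x}, nrm x ^ t = ∫ x : Fin n → ℝ, g (nrm x) := by
    rw [← integral_indicator meas_Omega]
    refine integral_congr_ae (Filter.Eventually.of_forall fun x => ?_)
    by_cases h : 1 < nrm x <;> simp [hg, Set.indicator, h, Set.mem_setOf_eq]
  have hnrm : ∀ y : EuclideanSpace ℝ (Fin n),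
      nrm ((MeasurableEquiv.toLp 2 (Fin n → ℝ)).symm y) = ‖y‖ := by
    intro y
    rw [EuclideanSpace.norm_eq, nrm_eq_sqrt]
    congr 1
    apply Finset.sum_congr rfl
    intro j _
    rw [Real.norm_eq_abs, sq_abs]
    rfl
  have h1 : ∫ x : Fin n → ℝ, g (nrm x) = ∫ y : EuclideanSpace ℝ (Fin n), g ‖y‖ := by
    rw [← (EuclideanSpace.volume_preserving_symm_measurableEquiv_toLp (Fin n)).integral_comp
        (MeasurableEquiv.measurableEmbedding _) (fun x => g (nrm x))]
    exact integral_congr_ae (Filter.Eventually.of_forall fun y => by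
      show g (nrm _) = g ‖y‖
      rw [hnrm y])
  have h2 := MeasureTheory.integral_fun_norm_addHaar
    (volume : Measure (EuclideanSpace ℝ (Fin n))) g
  rw [finrank_euclideanSpace_fin] at h2
  have h3 : ∫ y in Set.Ioi (0 : ℝ), y ^ (n - 1) • g y
      = ∫ r in Set.Ioi (1 : ℝ), r ^ (t + (n : ℝ) - 1) := by
    have hind : ∀ y : ℝ, y ^ (n - 1) • g y
        = Set.indicator (Set.Ioi 1) (fun r => r ^ (n - 1) * r ^ t) y := by
      intro y
      by_cases h : y ∈ Set.Ioi (1 : ℝ) <;> simp [hg, Set.indicator, h]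
    simp_rw [hind]
    rw [setIntegral_indicator measurableSet_Ioi,
      Set.inter_eq_self_of_subset_right (Set.Ioi_subset_Ioi zero_le_one)]
    apply setIntegral_congr_fun measurableSet_Ioi
    intro r hr
    have hr0 : 0 < r := lt_trans one_pos hr
    show r ^ (n - 1) * r ^ t = r ^ (t + (n : ℝ) - 1)
    rw [← Real.rpow_natCast r (n - 1), ← Real.rpow_add hr0]
    congr 1
    have h1n : ((n - 1 : ℕ) : ℝ) = (n : ℝ) - 1 := by
      have : 1 ≤ n := by omega
      push_cast [this]
      ring
    rw [h1n]; ring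
  have h4 : ∫ r in Set.Ioi (1 : ℝ), r ^ (t + (n : ℝ) - 1) = -1 / (t + (n : ℝ)) := by
    rw [integral_Ioi_rpow_of_lt (by linarith) one_pos, Real.one_rpow]
    ring_nf
  rw [h0, h1, h2, h3, h4]
  simp only [nsmul_eq_mul, smul_eq_mul, measureReal_def]
  ring

end Cliff

open Cliff


/-- the obstruction in higher dimensions. On
`Ω = ℝⁿ ∖ closure B(0,1)` with `φ = n log|x|`, for `u_m = |x|^{−1/m}` and
`f_m = −(1/m)|x|^{−1/m−2} x` one has: (i) `Δφ = n(n−2)/|x|²` on `Ω`;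
(ii) `Du_m = f_m` on `Ω`; (iii) `‖u_m‖²_φ = (m/2) σ_{n−1}`;
(iv) `∫_Ω (|f_m|²/Δφ) e^{−φ} = σ_{n−1}/(2 m n (n−2))`; consequently the ratio
equals `m² n (n−2)` and tends to `+∞`. Here `σ_{n−1} = n · vol(Bⁿ)` is the
surface area of the unit sphere. -/
theorem dirac_obstruction_higher_dim (n : ℕ) (hn : 3 ≤ n)
    (Ω : Set (Fin n → ℝ)) (hΩ : Ω = {x | 1 < Cliff.nrm x})
    (φ : (Fin n → ℝ) → ℝ) (hφ : φ = fun x => n * Real.log (Cliff.nrm x))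
    (σ : ℝ) (hσ : σ = (n : ℝ) *
      (volume (Metric.ball (0 : EuclideanSpace ℝ (Fin n)) 1)).toReal)
    (u f : ℕ → (Fin n → ℝ) → Cl n)
    (hu : ∀ m x, u m x = Cliff.scal (Cliff.nrm x ^ (-(1 / (m : ℝ)))))
    (hf : ∀ m x, f m x =
      (-(1 / (m : ℝ)) * Cliff.nrm x ^ (-(1 / (m : ℝ)) - 2)) • Cliff.vec x) :
    (∀ x ∈ Ω, Cliff.lap φ x = (n : ℝ) * ((n : ℝ) - 2) / Cliff.nrm x ^ 2) ∧
    (∀ m : ℕ, 0 < m → ∀ x ∈ Ω, Cliff.Dirac (u m) x = f m x) ∧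
    (∀ m : ℕ, 0 < m → Cliff.wnorm Ω φ (u m) = (m : ℝ) / 2 * σ) ∧
    (∀ m : ℕ, 0 < m →
      (∫ x in Ω, Cliff.normSq (f m x) / Cliff.lap φ x * Real.exp (-φ x)) =
        σ / (2 * (m : ℝ) * (n : ℝ) * ((n : ℝ) - 2))) ∧
    (∀ m : ℕ, 0 < m →
      Cliff.wnorm Ω φ (u m) /
        (∫ x in Ω, Cliff.normSq (f m x) / Cliff.lap φ x * Real.exp (-φ x)) =
        (m : ℝ) ^ 2 * (n : ℝ) * ((n : ℝ) - 2)) ∧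
    Filter.Tendsto (fun m : ℕ =>
      Cliff.wnorm Ω φ (u m) /
        (∫ x in Ω, Cliff.normSq (f m x) / Cliff.lap φ x * Real.exp (-φ x)))
      Filter.atTop Filter.atTop := by
  
  subst hΩ hφ hσ
  have hn0 : (0 : ℝ) < n := by positivity
  have hn2 : (0 : ℝ) < (n : ℝ) - 2 := by
    have : (3 : ℝ) ≤ n := by exact_mod_cast hn
    linarith
  -- positivity of σ
  have hVpos : 0 < (volume (Metric.ball (0 : EuclideanSpace ℝ (Fin n)) 1)).toReal := by
    refine ENNReal.toReal_pos ?_ ?_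
    · exact (Metric.measure_ball_pos volume 0 one_pos).ne'
    · exact (measure_ball_lt_top).ne
  have hσpos : 0 < (n : ℝ) *
      (volume (Metric.ball (0 : EuclideanSpace ℝ (Fin n)) 1)).toReal := by positivity
  -- master integral specialized
  have master_m : ∀ m : ℕ, 0 < m →
      (∫ x in {x : Fin n → ℝ | 1 < nrm x},
        nrm x ^ (2 * (-(1 / (m : ℝ))) - (n : ℝ)))
      = ((n : ℝ) * (volume (Metric.ball (0 : EuclideanSpace ℝ (Fin n)) 1)).toReal)
        * ((m : ℝ) / 2) := by
    intro m hm
    have hm0 : (0 : ℝ) < m := by exact_mod_cast hm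
    have hside : 2 * (-(1 / (m : ℝ))) - (n : ℝ) + (n : ℝ) < 0 := by
      have h1 : (0 : ℝ) < 1 / (m : ℝ) := by positivity
      nlinarith
    rw [master_integral hn _ hside]
    rw [show 2 * (-(1 / (m : ℝ))) - (n : ℝ) + (n : ℝ) = -(2 / (m : ℝ)) by ring]
    rw [show (-1 : ℝ) / -(2 / (m : ℝ)) = (m : ℝ) / 2 by field_simp]
  -- part (i)
  have partI : ∀ x ∈ {x : Fin n → ℝ | 1 < nrm x},
      Cliff.lap (fun x => n * Real.log (Cliff.nrm x)) x
        = (n : ℝ) * ((n : ℝ) - 2) / Cliff.nrm x ^ 2 := by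
    intro x hx
    rw [nrm_sq]
    exact lap_phi (Q_pos hx)
  -- part (ii)
  have partII : ∀ m : ℕ, 0 < m → ∀ x ∈ {x : Fin n → ℝ | 1 < nrm x},
      Cliff.Dirac (u m) x = f m x := by
    intro m hm x hx
    rw [show u m = fun y => scal (nrm y ^ (-(1 / (m : ℝ)))) from funext (hu m), hf]
    exact dirac_u hm (Q_pos hx)
  -- pointwise integrand for (iii)
  have keyIII : ∀ m : ℕ, 0 < m → ∀ x ∈ {x : Fin n → ℝ | 1 < nrm x},
      normSq (u m x) * Real.exp (-((fun x => (n : ℝ) * Real.log (nrm x)) x))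
        = nrm x ^ (2 * (-(1 / (m : ℝ))) - (n : ℝ)) := by
    intro m hm x hx
    have hr : 0 < nrm x := nrm_pos hx
    have hexp : Real.exp (-((n : ℝ) * Real.log (nrm x))) = nrm x ^ (-(n : ℝ)) := by
      rw [Real.rpow_def_of_pos hr]
      congr 1
      ring
    rw [hu, normSq_scal]
    show (nrm x ^ (-(1 / (m : ℝ)))) ^ 2 * Real.exp (-((n : ℝ) * Real.log (nrm x))) = _
    rw [hexp, sq, ← Real.rpow_add hr, ← Real.rpow_add hr]
    congr 1
    ring
  -- part (iii)
  have partIII : ∀ m : ℕ, 0 < m →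
      Cliff.wnorm {x : Fin n → ℝ | 1 < nrm x} (fun x => (n : ℝ) * Real.log (nrm x)) (u m)
        = (m : ℝ) / 2 * ((n : ℝ) *
            (volume (Metric.ball (0 : EuclideanSpace ℝ (Fin n)) 1)).toReal) := by
    intro m hm
    rw [wnorm, setIntegral_congr_fun meas_Omega (keyIII m hm), master_m m hm]
    ring
  -- pointwise integrand for (iv)
  have keyIV : ∀ m : ℕ, 0 < m → ∀ x ∈ {x : Fin n → ℝ | 1 < nrm x},
      normSq (f m x) / Cliff.lap (fun x => (n : ℝ) * Real.log (nrm x)) x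
          * Real.exp (-((fun x => (n : ℝ) * Real.log (nrm x)) x))
        = (1 / ((m : ℝ) ^ 2 * ((n : ℝ) * ((n : ℝ) - 2))))
            * nrm x ^ (2 * (-(1 / (m : ℝ))) - (n : ℝ)) := by
    intro m hm x hx
    have hr : 0 < nrm x := nrm_pos hx
    have hm0 : ((m : ℝ)) ≠ 0 := Nat.cast_ne_zero.mpr hm.ne'
    have hexp : Real.exp (-((n : ℝ) * Real.log (nrm x))) = nrm x ^ (-(n : ℝ)) := by
      rw [Real.rpow_def_of_pos hr]
      congr 1
      ring
    have hQsum : Q x = nrm x ^ (2 : ℝ) := by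
      rw [← nrm_sq, ← Real.rpow_natCast (nrm x) 2]
      norm_num
    have hsum : (∑ j : Fin n, x j ^ 2) = nrm x ^ (2 : ℝ) := hQsum
    have hp : (nrm x ^ ((-(1 / (m : ℝ))) - 2)) ^ 2
        = nrm x ^ (2 * (-(1 / (m : ℝ))) - 4) := by
      rw [← Real.rpow_natCast (nrm x ^ (-(1 / (m : ℝ)) - 2)) 2, ← Real.rpow_mul hr.le]
      congr 1
      push_cast
      ring
    rw [hf, normSq_smul, normSq_vec, lap_phi (Q_pos hx), hsum, hQsum, mul_pow, hp]
    show (-(1 / (m : ℝ))) ^ 2 * nrm x ^ (2 * (-(1 / (m : ℝ))) - 4) * nrm x ^ (2 : ℝ)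
          / ((n : ℝ) * ((n : ℝ) - 2) / nrm x ^ (2 : ℝ))
          * Real.exp (-((n : ℝ) * Real.log (nrm x))) = _
    rw [hexp]
    rw [div_div_eq_mul_div, div_mul_eq_mul_div]
    rw [show (-(1 / (m : ℝ))) ^ 2 * nrm x ^ (2 * (-(1 / (m : ℝ))) - 4) * nrm x ^ (2 : ℝ)
          * nrm x ^ (2 : ℝ) * nrm x ^ (-(n : ℝ))
        = (1 / (m : ℝ) ^ 2) * (nrm x ^ (2 * (-(1 / (m : ℝ))) - 4) * nrm x ^ (2 : ℝ)
          * nrm x ^ (2 : ℝ) * nrm x ^ (-(n : ℝ))) by ring]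
    rw [← Real.rpow_add hr, ← Real.rpow_add hr, ← Real.rpow_add hr]
    rw [show 2 * (-(1 / (m : ℝ))) - 4 + 2 + 2 + -(n : ℝ)
        = 2 * (-(1 / (m : ℝ))) - (n : ℝ) by ring]
    field_simp
  -- part (iv)
  have partIV : ∀ m : ℕ, 0 < m →
      (∫ x in {x : Fin n → ℝ | 1 < nrm x},
          normSq (f m x) / Cliff.lap (fun x => (n : ℝ) * Real.log (nrm x)) x
            * Real.exp (-((fun x => (n : ℝ) * Real.log (nrm x)) x)))
        = ((n : ℝ) * (volume (Metric.ball (0 : EuclideanSpace ℝ (Fin n)) 1)).toReal)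
            / (2 * (m : ℝ) * (n : ℝ) * ((n : ℝ) - 2)) := by
    intro m hm
    have hm0 : ((m : ℝ)) ≠ 0 := Nat.cast_ne_zero.mpr hm.ne'
    rw [setIntegral_congr_fun meas_Omega (keyIV m hm), integral_const_mul, master_m m hm]
    field_simp
  -- part (v)
  have partV : ∀ m : ℕ, 0 < m →
      Cliff.wnorm {x : Fin n → ℝ | 1 < nrm x} (fun x => (n : ℝ) * Real.log (nrm x)) (u m) /
        (∫ x in {x : Fin n → ℝ | 1 < nrm x},
          normSq (f m x) / Cliff.lap (fun x => (n : ℝ) * Real.log (nrm x)) x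
            * Real.exp (-((fun x => (n : ℝ) * Real.log (nrm x)) x)))
        = (m : ℝ) ^ 2 * (n : ℝ) * ((n : ℝ) - 2) := by
    intro m hm
    have hm0 : ((m : ℝ)) ≠ 0 := Nat.cast_ne_zero.mpr hm.ne'
    rw [partIII m hm, partIV m hm]
    rw [div_div_eq_mul_div]
    field_simp
  refine ⟨partI, partII, partIII, partIV, partV, ?_⟩
  have hev : ∀ᶠ m : ℕ in Filter.atTop,
      (m : ℝ) ^ 2 * (n : ℝ) * ((n : ℝ) - 2)
        = Cliff.wnorm {x : Fin n → ℝ | 1 < nrm x}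
            (fun x => (n : ℝ) * Real.log (nrm x)) (u m) /
          (∫ x in {x : Fin n → ℝ | 1 < nrm x},
            normSq (f m x) / Cliff.lap (fun x => (n : ℝ) * Real.log (nrm x)) x
              * Real.exp (-((fun x => (n : ℝ) * Real.log (nrm x)) x))) := by
    filter_upwards [Filter.eventually_ge_atTop 1] with m hm
    exact (partV m hm).symm
  refine Filter.Tendsto.congr' hev ?_
  have h1 : Filter.Tendsto (fun m : ℕ => ((m : ℝ)) ^ 2) Filter.atTop Filter.atTop :=
    (Filter.tendsto_pow_atTop two_ne_zero).comp tendsto_natCast_atTop_atTop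
  have h2 := h1.atTop_mul_const (show (0 : ℝ) < (n : ℝ) * ((n : ℝ) - 2) by positivity)
  exact h2.congr fun m => by ring
end
end

section
/- Let n ≥ 2, let U ⊆ ℝⁿ ∖ {0} be open and let I(U) = { x ∈ ℝⁿ ∖ {0} : x/|x|² ∈ U } be its image under Euclidean inversion. If g ∈ C¹(U, ℝ_n), then for every x ∈ I(U): D_x( (x/|x|ⁿ) · g(x/|x|²) ) = −(x/|x|^{n+2}) · (Dg)(x/|x|²), where x is regarded as the Clifford vector Σ_j x_j e_j and the products are Clifford products. In particular, if Dg = 0 on U, then x ↦ (x/|x|ⁿ) g(x/|x|²) is left monogenic on I(U). -/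
open scoped BigOperators
open MeasureTheory

noncomputable section

namespace CliffAux
open Cliff Finset
variable {n : ℕ}

open Cliff Finset
variable {n : ℕ}

lemma cmul_add_left (f₁ f₂ g : Cl n) : cmul (f₁ + f₂) g = cmul f₁ g + cmul f₂ g := by
  funext C
  simp only [cmul, Pi.add_apply, ← Finset.sum_add_distrib]
  exact Finset.sum_congr rfl fun A _ => by ring

lemma cmul_smul_left (a : ℝ) (f g : Cl n) : cmul (a • f) g = a • cmul f g := by
  funext C
  simp only [cmul, Pi.smul_apply, smul_eq_mul, Finset.mul_sum]
  exact Finset.sum_congr rfl fun A _ => by ring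

lemma cmul_add_right (f g₁ g₂ : Cl n) : cmul f (g₁ + g₂) = cmul f g₁ + cmul f g₂ := by
  funext C
  simp only [cmul, Pi.add_apply, ← Finset.sum_add_distrib]
  exact Finset.sum_congr rfl fun A _ => by ring

lemma cmul_smul_right (a : ℝ) (f g : Cl n) : cmul f (a • g) = a • cmul f g := by
  funext C
  simp only [cmul, Pi.smul_apply, smul_eq_mul, Finset.mul_sum]
  exact Finset.sum_congr rfl fun A _ => by ring

/-- `cmul` as a bilinear map. -/
def cmulL : Cl n →ₗ[ℝ] Cl n →ₗ[ℝ] Cl n :=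
  LinearMap.mk₂ ℝ cmul cmul_add_left cmul_smul_left cmul_add_right cmul_smul_right

@[simp] lemma cmulL_apply (f g : Cl n) : cmulL f g = cmul f g := rfl

lemma cmul_zero_right (f : Cl n) : cmul f (0 : Cl n) = 0 := (cmulL f).map_zero

lemma cmul_neg_right (f g : Cl n) : cmul f (-g) = -cmul f g := (cmulL f).map_neg g

lemma cmul_sum_right {ι : Type*} (s : Finset ι) (f : Cl n) (g : ι → Cl n) :
    cmul f (∑ i ∈ s, g i) = ∑ i ∈ s, cmul f (g i) := map_sum (cmulL f) g s

lemma cmul_sum_left {ι : Type*} (s : Finset ι) (f : ι → Cl n) (g : Cl n) :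
    cmul (∑ i ∈ s, f i) g = ∑ i ∈ s, cmul (f i) g := by
  induction s using Finset.cons_induction with
  | empty => funext C; simp [cmul]
  | cons i s hi ih => simp [Finset.sum_cons, cmul_add_left, ih]

lemma cmul_vec_left (x : Fin n → ℝ) (f : Cl n) :
    cmul (vec x) f = ∑ j : Fin n, x j • cmul (e j) f := by
  rw [vec, cmul_sum_left]
  exact Finset.sum_congr rfl fun j _ => cmul_smul_left _ _ _


open Cliff Finset
variable {n : ℕ}

def sgn (j : Fin n) (C : Finset (Fin n)) : ℝ := csign {j} (symmDiff {j} C)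

lemma card_singleton_product_filter (j : Fin n) (B : Finset (Fin n)) :
    (((({j} : Finset (Fin n)) ×ˢ B).filter fun p => p.2 < p.1)).card
      = (B.filter (· < j)).card := by
  rw [Finset.singleton_product, Finset.filter_map, Finset.card_map]
  congr 1

lemma filter_symmDiff_lt_self (j : Fin n) (C : Finset (Fin n)) :
    (symmDiff {j} C).filter (· < j) = C.filter (· < j) := by
  ext b
  simp only [Finset.mem_filter, Finset.mem_symmDiff, Finset.mem_singleton]
  constructor
  · rintro ⟨⟨rfl, _⟩ | ⟨hb, _⟩, hlt⟩
    · exact absurd hlt (lt_irrefl _)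
    · exact ⟨hb, hlt⟩
  · rintro ⟨hb, hlt⟩
    exact ⟨Or.inr ⟨hb, fun h => absurd (h ▸ hlt) (lt_irrefl _)⟩, hlt⟩

lemma mem_symmDiff_singleton_self (j : Fin n) (C : Finset (Fin n)) :
    j ∈ symmDiff ({j} : Finset (Fin n)) C ↔ j ∉ C := by
  simp [Finset.mem_symmDiff]

lemma mem_symmDiff_singleton_other {j k : Fin n} (h : k ≠ j) (C : Finset (Fin n)) :
    k ∈ symmDiff ({j} : Finset (Fin n)) C ↔ k ∈ C := by
  simp [Finset.mem_symmDiff, h]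

lemma inter_symmDiff_singleton (j : Fin n) (C : Finset (Fin n)) :
    (({j} : Finset (Fin n)) ∩ symmDiff {j} C) = if j ∈ C then ∅ else {j} := by
  split <;> rename_i h <;> ext b <;>
    simp only [Finset.mem_inter, Finset.mem_singleton, Finset.mem_symmDiff,
      Finset.notMem_empty, iff_false, not_and] <;> aesop

lemma sgn_eq (j : Fin n) (C : Finset (Fin n)) :
    sgn j C = (-1 : ℝ) ^ (C.filter (· < j)).card * (if j ∈ C then 1 else -1) := by
  unfold sgn csign
  rw [card_singleton_product_filter, filter_symmDiff_lt_self, inter_symmDiff_singleton]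
  split <;> simp [pow_add]

lemma cmul_e_apply (j : Fin n) (f : Cl n) (C : Finset (Fin n)) :
    cmul (e j) f C = sgn j C * f (symmDiff {j} C) := by
  unfold cmul
  rw [Finset.sum_eq_single ({j} : Finset (Fin n))]
  · simp [e, sgn]
  · intro A _ hA; simp [e, hA]
  · intro h; exact absurd (Finset.mem_univ _) h

lemma neg_one_pow_card_symmDiff (j : Fin n) (D : Finset (Fin n)) :
    (-1 : ℝ) ^ (symmDiff ({j} : Finset (Fin n)) D).card = -(-1 : ℝ) ^ D.card := by
  by_cases hj : j ∈ D
  · have hset : symmDiff ({j} : Finset (Fin n)) D = D.erase j := by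
      ext b; simp only [Finset.mem_symmDiff, Finset.mem_singleton, Finset.mem_erase]; aesop
    obtain ⟨m, hm⟩ : ∃ m, D.card = m + 1 :=
      ⟨D.card - 1, (Nat.succ_pred_eq_of_pos (Finset.card_pos.2 ⟨j, hj⟩)).symm⟩
    rw [hset, Finset.card_erase_of_mem hj, hm]
    simp [pow_succ]
  · have hset : symmDiff ({j} : Finset (Fin n)) D = insert j D := by
      ext b; simp only [Finset.mem_symmDiff, Finset.mem_singleton, Finset.mem_insert]; aesop
    rw [hset, Finset.card_insert_of_notMem hj, pow_succ]; ring

lemma filter_symmDiff_lt_of_lt {j k : Fin n} (h : j < k) (C : Finset (Fin n)) :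
    (symmDiff ({j} : Finset (Fin n)) C).filter (· < k)
      = symmDiff {j} (C.filter (· < k)) := by
  ext b
  simp only [Finset.mem_filter, Finset.mem_symmDiff, Finset.mem_singleton]
  constructor
  · rintro ⟨⟨rfl, hbC⟩ | ⟨hbC, hbj⟩, hlt⟩
    · exact Or.inl ⟨rfl, fun hc => hbC hc.1⟩
    · exact Or.inr ⟨⟨hbC, hlt⟩, hbj⟩
  · rintro (⟨rfl, hbC⟩ | ⟨⟨hbC, hlt⟩, hbj⟩)
    · exact ⟨Or.inl ⟨rfl, fun hc => hbC ⟨hc, h⟩⟩, h⟩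
    · exact ⟨Or.inr ⟨hbC, hbj⟩, hlt⟩

lemma filter_symmDiff_lt_of_gt {j k : Fin n} (h : k < j) (C : Finset (Fin n)) :
    (symmDiff ({j} : Finset (Fin n)) C).filter (· < k) = C.filter (· < k) := by
  ext b
  simp only [Finset.mem_filter, Finset.mem_symmDiff, Finset.mem_singleton]
  constructor
  · rintro ⟨⟨rfl, _⟩ | ⟨hbC, _⟩, hlt⟩
    · exact absurd (hlt.trans h) (lt_irrefl _)
    · exact ⟨hbC, hlt⟩
  · rintro ⟨hbC, hlt⟩
    exact ⟨Or.inr ⟨hbC, fun hbj => absurd (hbj ▸ hlt) (fun hh => absurd (hh.trans h) (lt_irrefl _))⟩, hlt⟩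

lemma sgn_mul_sgn_self (j : Fin n) (C : Finset (Fin n)) :
    sgn j C * sgn j (symmDiff {j} C) = -1 := by
  rw [sgn_eq, sgn_eq, filter_symmDiff_lt_self]
  simp only [mem_symmDiff_singleton_self]
  have h2 : (-1:ℝ) ^ (C.filter (· < j)).card * (-1:ℝ) ^ (C.filter (· < j)).card = 1 := by
    rw [← pow_add]; exact Even.neg_one_pow ⟨_, rfl⟩
  by_cases hj : j ∈ C <;> simp only [hj, if_true, if_false, not_true, not_false_iff] <;>
    linear_combination (-1 : ℝ) * h2

lemma sgn_mul_sgn_comm {j k : Fin n} (h : j ≠ k) (C : Finset (Fin n)) :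
    sgn j C * sgn k (symmDiff {j} C) = -(sgn k C * sgn j (symmDiff {k} C)) := by
  rcases h.lt_or_gt with hlt | hlt
  · rw [sgn_eq, sgn_eq, sgn_eq, sgn_eq, filter_symmDiff_lt_of_lt hlt,
      filter_symmDiff_lt_of_gt hlt, neg_one_pow_card_symmDiff]
    simp only [mem_symmDiff_singleton_other h.symm, mem_symmDiff_singleton_other h]
    ring
  · rw [sgn_eq, sgn_eq, sgn_eq, sgn_eq, filter_symmDiff_lt_of_gt hlt,
      filter_symmDiff_lt_of_lt hlt, neg_one_pow_card_symmDiff]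
    simp only [mem_symmDiff_singleton_other h.symm, mem_symmDiff_singleton_other h]
    ring


lemma e_mul_e_self (j : Fin n) (f : Cl n) :
    cmul (e j) (cmul (e j) f) = -f := by
  funext C
  rw [Pi.neg_apply, cmul_e_apply, cmul_e_apply, symmDiff_symmDiff_cancel_left,
    ← mul_assoc, sgn_mul_sgn_self]
  ring

lemma e_mul_e_comm {j k : Fin n} (h : j ≠ k) (f : Cl n) :
    cmul (e j) (cmul (e k) f) = -cmul (e k) (cmul (e j) f) := by
  funext C
  rw [Pi.neg_apply, cmul_e_apply, cmul_e_apply, cmul_e_apply, cmul_e_apply,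
    symmDiff_left_comm, ← mul_assoc, ← mul_assoc, sgn_mul_sgn_comm h]
  ring

lemma e_mul_e (j k : Fin n) (f : Cl n) :
    cmul (e k) (cmul (e j) f) =
      -cmul (e j) (cmul (e k) f) - (if j = k then (2:ℝ) • f else 0) := by
  by_cases h : j = k
  · subst h
    rw [e_mul_e_self, if_pos rfl]
    funext C
    simp only [Pi.sub_apply, Pi.neg_apply, Pi.smul_apply, smul_eq_mul]
    ring
  · rw [e_mul_e_comm (Ne.symm h), if_neg h, sub_zero]

lemma cmul_cmul_vec (w : Cl n) (x : Fin n → ℝ) (f : Cl n) :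
    cmul w (cmul (vec x) f) = ∑ j : Fin n, x j • cmul w (cmul (e j) f) := by
  rw [cmul_vec_left x f, cmul_sum_right]
  exact Finset.sum_congr rfl fun j _ => cmul_smul_right _ _ _

lemma e_mul_vec (k : Fin n) (x : Fin n → ℝ) (f : Cl n) :
    cmul (e k) (cmul (vec x) f) =
      -cmul (vec x) (cmul (e k) f) - (2 * x k) • f := by
  rw [cmul_vec_left, cmul_sum_right, cmul_vec_left]
  have : ∀ j : Fin n, cmul (e k) (x j • cmul (e j) f)
      = x j • (-cmul (e j) (cmul (e k) f)) - (if j = k then (2 * x k) • f else 0) := by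
    intro j
    rw [cmul_smul_right, e_mul_e j k f, smul_sub]
    congr 1
    by_cases h : j = k
    · subst h; rw [if_pos rfl, if_pos rfl, smul_smul]; ring_nf
    · simp [h]
  rw [Finset.sum_congr rfl fun j _ => this j, Finset.sum_sub_distrib,
    Finset.sum_ite_eq' Finset.univ k (fun _ => (2 * x k) • f)]
  simp only [Finset.mem_univ, if_true, smul_neg]
  rw [Finset.sum_neg_distrib, ← cmul_vec_left]

lemma vec_mul_vec (x : Fin n → ℝ) (f : Cl n) :
    cmul (vec x) (cmul (vec x) f) = -((∑ j : Fin n, x j ^ 2) • f) := by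
  have h : cmul (vec x) (cmul (vec x) f)
      = -cmul (vec x) (cmul (vec x) f) - (2 * ∑ j : Fin n, x j ^ 2) • f := by
    calc cmul (vec x) (cmul (vec x) f)
        = ∑ k : Fin n, x k • cmul (e k) (cmul (vec x) f) := cmul_vec_left _ _
      _ = ∑ k : Fin n, (x k • (-cmul (vec x) (cmul (e k) f)) - (2 * x k ^ 2) • f) := by
          refine Finset.sum_congr rfl fun k _ => ?_
          rw [e_mul_vec, smul_sub, smul_smul]
          ring_nf
      _ = -cmul (vec x) (cmul (vec x) f) - (2 * ∑ j : Fin n, x j ^ 2) • f := by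
          rw [Finset.sum_sub_distrib]
          congr 1
          · simp only [smul_neg]
            rw [Finset.sum_neg_distrib, cmul_cmul_vec (vec x) x f]
          · rw [← Finset.sum_smul]
            congr 1
            rw [Finset.mul_sum]
  funext C
  have hC := congrFun h C
  simp only [Pi.sub_apply, Pi.neg_apply, Pi.smul_apply, smul_eq_mul] at hC ⊢
  linarith

lemma key (x : Fin n → ℝ) (q s c t : ℝ) (hq : q = ∑ j : Fin n, x j ^ 2)
    (hc : c * q = s) (ht : q * t = 1) (gy Gx : Cl n) (P : Fin n → Cl n)
    (hGx : Gx = ∑ j : Fin n, x j • P j) :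
    ∑ k : Fin n, cmul (e k)
        (s • (cmul (e k) gy
            + cmul (vec x) (t • P k + (-(2 * x k) * (t * t)) • Gx))
          + (-((n : ℝ) * x k) * c) • cmul (vec x) gy)
      = -((s * t) • cmul (vec x) (∑ k : Fin n, cmul (e k) (P k))) := by
  have h2sum : ∑ k : Fin n, (2 * x k) • P k = (2 : ℝ) • Gx := by
    rw [hGx, Finset.smul_sum]
    exact Finset.sum_congr rfl fun k _ => by rw [smul_smul]
  have h1 : ∑ k : Fin n, cmul (e k) (cmul (e k) gy) = (n : ℝ) • (-gy) := by
    simp only [e_mul_e_self, Finset.sum_const, Finset.card_univ, Fintype.card_fin]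
    rw [← Nat.cast_smul_eq_nsmul ℝ]
  have h2 : ∑ k : Fin n, cmul (e k) (cmul (vec x) (P k))
      = -cmul (vec x) (∑ k : Fin n, cmul (e k) (P k)) - (2 : ℝ) • Gx := by
    rw [Finset.sum_congr rfl fun k _ => e_mul_vec k x (P k), Finset.sum_sub_distrib,
      h2sum]
    congr 1
    rw [Finset.sum_neg_distrib, ← cmul_sum_right]
  have h3 : ∑ k : Fin n, x k • cmul (e k) (cmul (vec x) Gx) = -(q • Gx) := by
    rw [← cmul_vec_left, vec_mul_vec, hq]
  have h4 : ∑ k : Fin n, x k • cmul (e k) (cmul (vec x) gy) = -(q • gy) := by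
    rw [← cmul_vec_left, vec_mul_vec, hq]
  calc ∑ k : Fin n, cmul (e k)
        (s • (cmul (e k) gy
            + cmul (vec x) (t • P k + (-(2 * x k) * (t * t)) • Gx))
          + (-((n : ℝ) * x k) * c) • cmul (vec x) gy)
      = ∑ k : Fin n, (s • cmul (e k) (cmul (e k) gy)
          + ((s * t) • cmul (e k) (cmul (vec x) (P k))
          + ((-2 * (t * t) * s) • (x k • cmul (e k) (cmul (vec x) Gx))
          + ((-(n : ℝ) * c) • (x k • cmul (e k) (cmul (vec x) gy)))))) := by
        refine Finset.sum_congr rfl fun k _ => ?_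
        simp only [cmul_add_right, cmul_smul_right]
        match_scalars <;> ring
    _ = s • ∑ k : Fin n, cmul (e k) (cmul (e k) gy)
          + ((s * t) • ∑ k : Fin n, cmul (e k) (cmul (vec x) (P k))
          + ((-2 * (t * t) * s) • ∑ k : Fin n, x k • cmul (e k) (cmul (vec x) Gx)
          + ((-(n : ℝ) * c) • ∑ k : Fin n, x k • cmul (e k) (cmul (vec x) gy)))) := by
        simp only [Finset.sum_add_distrib, Finset.smul_sum]
    _ = -((s * t) • cmul (vec x) (∑ k : Fin n, cmul (e k) (P k))) := by
        rw [h1, h2, h3, h4]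
        match_scalars
        · linear_combination (n : ℝ) * hc
        · ring
        · linear_combination 2 * s * t * ht


/-! ### Analytic helpers -/

/-- `vec` as a linear map. -/
def vecL : (Fin n → ℝ) →ₗ[ℝ] Cl n where
  toFun := vec
  map_add' x y := by
    simp only [vec, Pi.add_apply, add_smul, Finset.sum_add_distrib]
  map_smul' a x := by
    simp only [vec, Pi.smul_apply, smul_eq_mul, RingHom.id_apply, Finset.smul_sum, mul_smul]

/-- `vec` as a continuous linear map. -/
def vecCLM : (Fin n → ℝ) →L[ℝ] Cl n := LinearMap.toContinuousLinearMap vecL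

@[simp] lemma vecCLM_apply (x : Fin n → ℝ) : vecCLM x = vec x := rfl

lemma vec_single (k : Fin n) : vec (Pi.single k (1:ℝ)) = e k := by
  rw [vec, Finset.sum_eq_single k]
  · simp
  · intro j _ hj; simp [Pi.single_apply, hj]
  · intro h; exact absurd (Finset.mem_univ _) h

/-- `cmul` as a continuous bilinear map. -/
def cmulCLM : Cl n →L[ℝ] Cl n →L[ℝ] Cl n :=
  LinearMap.toContinuousLinearMap
    { toFun := fun f => LinearMap.toContinuousLinearMap (cmulL f)
      map_add' := fun f g => by ext h C; simp [cmul_add_left]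
      map_smul' := fun a f => by ext h C; simp [cmul_smul_left] }

lemma isBoundedBilinearMap_cmul :
    IsBoundedBilinearMap ℝ (fun p : Cl n × Cl n => cmul p.1 p.2) :=
  (cmulCLM (n := n)).isBoundedBilinearMap

lemma nrm_sq (z : Fin n → ℝ) : nrm z ^ 2 = ∑ j : Fin n, z j ^ 2 :=
  Real.sq_sqrt (by positivity)

lemma nrm_pos {z : Fin n → ℝ} (hz : z ≠ 0) : 0 < nrm z := by
  obtain ⟨j, hj⟩ := Function.ne_iff.1 hz
  exact Real.sqrt_pos.2 (Finset.sum_pos' (fun i _ => sq_nonneg _)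
    ⟨j, Finset.mem_univ j, pow_pos (abs_pos.2 hj) 2 |>.trans_le (by rw [sq_abs])⟩)

lemma hasFDerivAt_sumSq (x : Fin n → ℝ) :
    HasFDerivAt (fun z : Fin n → ℝ => ∑ j : Fin n, z j ^ 2)
      (∑ j : Fin n, (2 * x j) • (ContinuousLinearMap.proj j : (Fin n → ℝ) →L[ℝ] ℝ)) x := by
  refine HasFDerivAt.fun_sum fun j _ => ?_
  have h := ((ContinuousLinearMap.proj j : (Fin n → ℝ) →L[ℝ] ℝ).hasFDerivAt (x := x)).mul
    ((ContinuousLinearMap.proj j : (Fin n → ℝ) →L[ℝ] ℝ).hasFDerivAt (x := x))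
  simp only [ContinuousLinearMap.proj_apply] at h
  have hfun : (fun z : Fin n → ℝ => z j ^ 2) = fun z => z j * z j := by
    funext z; ring
  have hder : (2 * x j) • (ContinuousLinearMap.proj j : (Fin n → ℝ) →L[ℝ] ℝ)
      = x j • (ContinuousLinearMap.proj j : (Fin n → ℝ) →L[ℝ] ℝ)
        + x j • ContinuousLinearMap.proj j := by
    rw [two_mul, add_smul]
  rw [hfun, hder]
  exact h

lemma sumSq_deriv_apply (x : Fin n → ℝ) (k : Fin n) :
    (∑ j : Fin n, (2 * x j) • (ContinuousLinearMap.proj j : (Fin n → ℝ) →L[ℝ] ℝ))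
      (Pi.single k 1) = 2 * x k := by
  rw [ContinuousLinearMap.sum_apply]
  rw [Finset.sum_eq_single k]
  · simp
  · intro j _ hj
    simp [Pi.single_apply, Ne.symm hj]
  · intro h; exact absurd (Finset.mem_univ _) h

lemma single_eq_smul (x : Fin n → ℝ) (i : Fin n) :
    (Pi.single i (x i) : Fin n → ℝ) = x i • (Pi.single i (1:ℝ) : Fin n → ℝ) := by
  funext j
  by_cases h : j = i
  · subst h; simp
  · simp [Pi.single_apply, h]

lemma clm_apply_vec_sum (x : Fin n → ℝ) (T : (Fin n → ℝ) →L[ℝ] Cl n) :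
    T x = ∑ i : Fin n, x i • T (Pi.single i 1) := by
  conv_lhs => rw [← Finset.univ_sum_single x]
  rw [map_sum]
  exact Finset.sum_congr rfl fun i _ => by rw [single_eq_smul, _root_.map_smul]

end CliffAux

/-- the Kelvin transform identity. For `g ∈ C¹(U, ℝ_n)` with
`U ⊆ ℝⁿ ∖ {0}` open and `K(x) = (x/|x|ⁿ) g(x/|x|²)`, for every `x` in the
inverted set `I(U)` one has `D K(x) = −(x/|x|^{n+2}) (Dg)(x/|x|²)`; in
particular, if `Dg = 0` on `U` then `K` is left monogenic on `I(U)`. -/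
theorem dirac_kelvin_transform (n : ℕ) (hn : 2 ≤ n)
    (U : Set (Fin n → ℝ)) (hU : IsOpen U) (hU0 : ∀ x ∈ U, x ≠ 0)
    (g : (Fin n → ℝ) → Cl n) (hg : ContDiffOn ℝ 1 g U)
    (K : (Fin n → ℝ) → Cl n)
    (hK : K = fun x => (Cliff.nrm x ^ n)⁻¹ •
      Cliff.cmul (Cliff.vec x) (g ((Cliff.nrm x ^ 2)⁻¹ • x))) :
    (∀ x : Fin n → ℝ, x ≠ 0 → (Cliff.nrm x ^ 2)⁻¹ • x ∈ U →
      Cliff.Dirac K x =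
        -((Cliff.nrm x ^ (n + 2))⁻¹ •
          Cliff.cmul (Cliff.vec x)
            (Cliff.Dirac g ((Cliff.nrm x ^ 2)⁻¹ • x)))) ∧
    ((∀ y ∈ U, Cliff.Dirac g y = 0) →
      ∀ x : Fin n → ℝ, x ≠ 0 → (Cliff.nrm x ^ 2)⁻¹ • x ∈ U →
        Cliff.Dirac K x = 0) := by
  classical
  have main : ∀ x : Fin n → ℝ, x ≠ 0 → (Cliff.nrm x ^ 2)⁻¹ • x ∈ U →
      Cliff.Dirac K x =
        -((Cliff.nrm x ^ (n + 2))⁻¹ •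
          Cliff.cmul (Cliff.vec x)
            (Cliff.Dirac g ((Cliff.nrm x ^ 2)⁻¹ • x))) := by
    intro x hx hxU
    have hNpos : 0 < Cliff.nrm x := CliffAux.nrm_pos hx
    set N : ℝ := Cliff.nrm x with hN
    have hNne : N ≠ 0 := ne_of_gt hNpos
    have hQx : N ^ 2 = ∑ j : Fin n, x j ^ 2 := CliffAux.nrm_sq x
    set q : ℝ := ∑ j : Fin n, x j ^ 2 with hqdef
    have hqpos : 0 < q := by rw [← hQx]; positivity
    have hqne : q ≠ 0 := ne_of_gt hqpos
    have hsqrtq : Real.sqrt q = N := by rw [hqdef, hN]; rfl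
    rw [hQx] at hxU ⊢
    set y : Fin n → ℝ := q⁻¹ • x with hy
    -- derivative of g at y
    have hgd : DifferentiableAt ℝ g y :=
      (hg.contDiffAt (hU.mem_nhds hxU)).differentiableAt one_ne_zero
    set g' : (Fin n → ℝ) →L[ℝ] Cl n := fderiv ℝ g y with hg'def
    have hg' : HasFDerivAt g g' y := hgd.hasFDerivAt
    -- derivative of the squared norm
    have hQ : HasFDerivAt (fun z : Fin n → ℝ => ∑ j : Fin n, z j ^ 2)
        (∑ j : Fin n, (2 * x j) • (ContinuousLinearMap.proj j : (Fin n → ℝ) →L[ℝ] ℝ)) x :=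
      CliffAux.hasFDerivAt_sumSq x
    -- derivative of the inversion map
    have hinv := (hasDerivAt_inv hqne).comp_hasFDerivAt x hQ
    have hiota := hinv.smul (hasFDerivAt_id x)
    have hgcomp := hg'.comp x hiota
    -- derivative of the vector part
    have hvec : HasFDerivAt (fun z : Fin n → ℝ => Cliff.vec z) CliffAux.vecCLM x :=
      CliffAux.vecCLM.hasFDerivAt
    have hF := (CliffAux.isBoundedBilinearMap_cmul.hasFDerivAt
      (Cliff.vec x, g y)).comp x (hvec.prodMk hgcomp)
    -- derivative of the scalar factor
    have hsq1 : HasDerivAt Real.sqrt (1 / (2 * Real.sqrt q)) q := Real.hasDerivAt_sqrt hqne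
    have hsq2 := (hsq1.pow n).inv (by rw [Pi.pow_apply, hsqrtq]; exact pow_ne_zero _ hNne)
    have hS := hsq2.comp_hasFDerivAt x hQ
    -- rewrite K
    have hKfun : K = fun z => (Real.sqrt (∑ j : Fin n, z j ^ 2) ^ n)⁻¹ •
        Cliff.cmul (Cliff.vec z) (g ((∑ j : Fin n, z j ^ 2)⁻¹ • z)) := by
      rw [hK]; funext z; rw [CliffAux.nrm_sq z]; rfl
    have hKd := (hS.smul hF).congr_of_eventuallyEq (Filter.EventuallyEq.of_eq hKfun)
    have hGx : g' x = ∑ i : Fin n, x i • g' (Pi.single i 1) :=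
      CliffAux.clm_apply_vec_sum x g'
    obtain ⟨m, rfl⟩ : ∃ m, n = m + 1 := ⟨n - 1, by omega⟩
    have hpd : ∀ k : Fin (m + 1), Cliff.pd k K x
        = (N ^ (m + 1))⁻¹ • (Cliff.cmul (Cliff.e k) (g y)
            + Cliff.cmul (Cliff.vec x)
              (q⁻¹ • g' (Pi.single k 1) + (-(2 * x k) * (q⁻¹ * q⁻¹)) • g' x))
          + (-(((m + 1 : ℕ) : ℝ) * x k) * (N ^ (m + 1 + 2))⁻¹) •
            Cliff.cmul (Cliff.vec x) (g y) := by
      intro k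
      simp only [Cliff.pd]
      rw [hKd.fderiv]
      simp only [ContinuousLinearMap.add_apply, ContinuousLinearMap.smul_apply,
        ContinuousLinearMap.smulRight_apply, ContinuousLinearMap.comp_apply,
        ContinuousLinearMap.coe_comp', Function.comp_apply,
        ContinuousLinearMap.prod_apply, ContinuousLinearMap.id_apply,
        IsBoundedBilinearMap.deriv_apply, CliffAux.vecCLM_apply, CliffAux.vec_single,
        CliffAux.sumSq_deriv_apply, map_add, _root_.map_smul, Pi.pow_apply, Pi.inv_apply, Pi.smul_apply', hsqrtq, id_eq,
        ← hqdef, ← hy, Nat.add_sub_cancel]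
      simp only [CliffAux.cmul_add_right, CliffAux.cmul_smul_right, smul_eq_mul]
      match_scalars
      all_goals (try ring)
      all_goals (field_simp; simp only [one_div, inv_pow]; field_simp; ring)
    have hc : (N ^ (m + 1 + 2))⁻¹ * q = (N ^ (m + 1))⁻¹ := by
      rw [← hQx]
      field_simp
      ring
    have hkey := CliffAux.key (n := m + 1) x q ((N ^ (m + 1))⁻¹) ((N ^ (m + 1 + 2))⁻¹)
      q⁻¹ hqdef hc (mul_inv_cancel₀ hqne) (g y) (g' x)
      (fun k => g' (Pi.single k 1)) hGx
    calc Cliff.Dirac K x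
        = ∑ k : Fin (m + 1), Cliff.cmul (Cliff.e k) (Cliff.pd k K x) := rfl
      _ = ∑ k : Fin (m + 1), Cliff.cmul (Cliff.e k)
            ((N ^ (m + 1))⁻¹ • (Cliff.cmul (Cliff.e k) (g y)
              + Cliff.cmul (Cliff.vec x)
                (q⁻¹ • g' (Pi.single k 1) + (-(2 * x k) * (q⁻¹ * q⁻¹)) • g' x))
            + (-(((m + 1 : ℕ) : ℝ) * x k) * (N ^ (m + 1 + 2))⁻¹) •
              Cliff.cmul (Cliff.vec x) (g y)) :=
          Finset.sum_congr rfl fun k _ => by rw [hpd k]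
      _ = -(((N ^ (m + 1))⁻¹ * q⁻¹) •
            Cliff.cmul (Cliff.vec x)
              (∑ k : Fin (m + 1), Cliff.cmul (Cliff.e k) (g' (Pi.single k 1)))) := hkey
      _ = -((N ^ (m + 1 + 2))⁻¹ •
            Cliff.cmul (Cliff.vec x) (Cliff.Dirac g y)) := by
          rw [← hQx]
          congr 2
          rw [← mul_inv, ← pow_add]
  refine ⟨main, fun h0 x hx hxU => ?_⟩
  rw [main x hx hxU, h0 _ hxU, CliffAux.cmul_zero_right, smul_zero, neg_zero]
end
end

section
/- Let φ = x₁² and let Ω ⊆ ℝⁿ be a domain. For every u ∈ C_c^∞(Ω, ℝ_n): ‖Du − (Dφ)u‖²_φ = ‖D(e₁ u)‖²_φ + 2 ‖u‖²_φ; in particular ‖Du − (Dφ)u‖²_φ ≥ 2 ‖u‖²_φ. -/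
open scoped BigOperators
open MeasureTheory

noncomputable section

namespace Aux
open Cliff Finset

variable {n : ℕ}

/-- inner product on `Cl n`. -/
def ip (f g : Cl n) : ℝ := ∑ A : Finset (Fin n), f A * g A

lemma normSq_eq_ip (f : Cl n) : Cliff.normSq f = ip f f := by
  simp [Cliff.normSq, ip, sq]

lemma ip_comm (f g : Cl n) : ip f g = ip g f := by
  simp [ip, mul_comm]

lemma ip_add_left (f g h : Cl n) : ip (f + g) h = ip f h + ip g h := by
  simp [ip, add_mul, Finset.sum_add_distrib]

lemma ip_smul_left (c : ℝ) (f h : Cl n) : ip (c • f) h = c * ip f h := by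
  simp [ip, Finset.mul_sum, mul_assoc]

lemma ip_neg_left (f h : Cl n) : ip (-f) h = - ip f h := by
  simp [ip, Finset.sum_neg_distrib]

lemma ip_sub_left (f g h : Cl n) : ip (f - g) h = ip f h - ip g h := by
  simp [ip, sub_mul, Finset.sum_sub_distrib]

lemma ip_sub_right (f g h : Cl n) : ip f (g - h) = ip f g - ip f h := by
  rw [ip_comm, ip_sub_left, ip_comm g f, ip_comm h f]

lemma ip_add_right (f g h : Cl n) : ip f (g + h) = ip f g + ip f h := by
  rw [ip_comm, ip_add_left, ip_comm g f, ip_comm h f]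

lemma ip_smul_right (c : ℝ) (f h : Cl n) : ip f (c • h) = c * ip f h := by
  rw [ip_comm, ip_smul_left, ip_comm h f]

lemma ip_neg_right (f h : Cl n) : ip f (-h) = - ip f h := by
  rw [ip_comm, ip_neg_left, ip_comm h f]

lemma ip_sum_left {ι : Type*} (s : Finset ι) (f : ι → Cl n) (g : Cl n) :
    ip (∑ i ∈ s, f i) g = ∑ i ∈ s, ip (f i) g := by
  classical
  induction s using Finset.induction_on with
  | empty => simp [ip]
  | insert _ _ h ih => rw [Finset.sum_insert h, ip_add_left, ih, Finset.sum_insert h]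

/-- the sign in `e_j ⬝ f`. -/
def sgn (j : Fin n) (C : Finset (Fin n)) : ℝ := csign {j} (symmDiff {j} C)

lemma cmul_e (j : Fin n) (f : Cl n) :
    cmul (e j) f = fun C => sgn j C * f (symmDiff {j} C) := by
  funext C
  rw [cmul]
  rw [Finset.sum_eq_single ({j} : Finset (Fin n))]
  · simp [Cliff.e, sgn]
  · intro A _ hA
    simp [Cliff.e, hA]
  · simp

lemma csign_single (j : Fin n) (B : Finset (Fin n)) :
    csign {j} B = (-1:ℝ)^(B.filter (· < j)).card * (if j ∈ B then -1 else 1) := by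
  have h1 : (({j} : Finset (Fin n)) ×ˢ B).filter (fun p => p.2 < p.1)
      = {j} ×ˢ (B.filter (· < j)) := by
    ext ⟨a, b⟩
    simp only [Finset.mem_filter, Finset.mem_product, Finset.mem_singleton]
    constructor
    · rintro ⟨⟨rfl, hb⟩, hlt⟩; exact ⟨rfl, hb, hlt⟩
    · rintro ⟨rfl, hb, hlt⟩; exact ⟨⟨rfl, hb⟩, hlt⟩
  have h2 : ({j} : Finset (Fin n)) ∩ B = if j ∈ B then {j} else ∅ := by
    split_ifs with h
    · ext a; simp only [Finset.mem_inter, Finset.mem_singleton]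
      constructor
      · rintro ⟨rfl, _⟩; rfl
      · rintro rfl; exact ⟨rfl, h⟩
    · ext a; simp only [Finset.mem_inter, Finset.mem_singleton, Finset.notMem_empty, iff_false]
      rintro ⟨rfl, hc⟩; exact h hc
  rw [csign, h1, h2]
  rw [Finset.card_product, Finset.card_singleton, one_mul]
  split_ifs with h
  · rw [Finset.card_singleton, pow_add, pow_one]
  · rw [Finset.card_empty, pow_add, pow_zero, mul_one]

lemma filter_symmDiff_single (j k : Fin n) (C : Finset (Fin n)) :
    (symmDiff {j} C).filter (· < k) = symmDiff (({j} : Finset (Fin n)).filter (· < k)) (C.filter (· < k)) := by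
  ext a
  simp only [Finset.mem_filter, Finset.mem_symmDiff, Finset.mem_singleton]
  tauto

lemma filter_single_lt_self (j : Fin n) :
    (({j} : Finset (Fin n)).filter (· < j)) = ∅ := by
  ext a; simp only [Finset.mem_filter, Finset.mem_singleton, Finset.notMem_empty, iff_false]
  rintro ⟨rfl, h⟩; exact lt_irrefl _ h

lemma filter_single_lt (j k : Fin n) :
    (({j} : Finset (Fin n)).filter (· < k)) = if j < k then {j} else ∅ := by
  split_ifs with h
  · ext a; simp only [Finset.mem_filter, Finset.mem_singleton]
    constructor
    · rintro ⟨rfl, _⟩; rfl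
    · rintro rfl; exact ⟨rfl, h⟩
  · ext a; simp only [Finset.mem_filter, Finset.mem_singleton, Finset.notMem_empty, iff_false]
    rintro ⟨rfl, hlt⟩; exact h hlt

lemma neg_one_pow_symmDiff_single (j : Fin n) (D : Finset (Fin n)) :
    (-1:ℝ) ^ (symmDiff {j} D).card = -(-1:ℝ) ^ D.card := by
  by_cases h : j ∈ D
  · have he : symmDiff {j} D = D.erase j := by
      ext a
      simp only [Finset.mem_symmDiff, Finset.mem_singleton, Finset.mem_erase]
      constructor
      · rintro (⟨rfl, ha⟩ | ⟨ha, hb⟩)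
        · exact absurd h ha
        · exact ⟨hb, ha⟩
      · rintro ⟨ha, hb⟩; exact Or.inr ⟨hb, ha⟩
    have hc : D.card = (D.erase j).card + 1 := (Finset.card_erase_add_one h).symm
    rw [he, hc, pow_succ]
    ring
  · have he : symmDiff {j} D = insert j D := by
      ext a
      simp only [Finset.mem_symmDiff, Finset.mem_singleton, Finset.mem_insert]
      constructor
      · rintro (⟨rfl, _⟩ | ⟨ha, _⟩)
        · exact Or.inl rfl
        · exact Or.inr ha
      · rintro (rfl | ha)
        · exact Or.inl ⟨rfl, h⟩
        · exact Or.inr ⟨ha, fun hb => h (hb ▸ ha)⟩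
    rw [he, Finset.card_insert_of_notMem h, pow_succ]
    ring

lemma sgn_eq (j : Fin n) (C : Finset (Fin n)) :
    sgn j C = -((-1:ℝ)^(C.filter (· < j)).card * (if j ∈ C then -1 else 1)) := by
  rw [sgn, csign_single]
  have h1 : (symmDiff {j} C).filter (· < j) = C.filter (· < j) := by
    rw [filter_symmDiff_single, filter_single_lt_self]
    simp
  have h2 : j ∈ symmDiff {j} C ↔ j ∉ C := by
    simp [Finset.mem_symmDiff]
  rw [h1]
  by_cases h : j ∈ C
  · rw [if_pos h, if_neg (by simp [h2, h])]
    ring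
  · rw [if_neg h, if_pos (h2.mpr h)]
    ring

lemma sgn_mul_self (j : Fin n) (C : Finset (Fin n)) : sgn j C * sgn j C = 1 := by
  rw [sgn_eq]
  split_ifs with h <;>
  · ring_nf
    rw [pow_mul', neg_one_sq, one_pow]

lemma sgn_symmDiff (j : Fin n) (C : Finset (Fin n)) :
    sgn j (symmDiff {j} C) = - ((-1:ℝ)^(C.filter (· < j)).card * (if j ∈ C then 1 else -1)) := by
  rw [sgn_eq]
  have h1 : (symmDiff {j} C).filter (· < j) = C.filter (· < j) := by
    rw [filter_symmDiff_single, filter_single_lt_self]; simp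
  have h2 : j ∈ symmDiff {j} C ↔ j ∉ C := by simp [Finset.mem_symmDiff]
  rw [h1]
  by_cases h : j ∈ C
  · rw [if_neg (by simpa [h2] using h), if_pos h]
  · rw [if_pos (h2.mpr h), if_neg h]

lemma sgn_mul_sgn_symmDiff (j : Fin n) (C : Finset (Fin n)) :
    sgn j C * sgn j (symmDiff {j} C) = -1 := by
  rw [sgn_eq, sgn_symmDiff]
  have hp : ((-1:ℝ)^(C.filter (· < j)).card) * ((-1:ℝ)^(C.filter (· < j)).card) = 1 := by
    rw [← pow_add, ← two_mul, pow_mul, neg_one_sq, one_pow]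
  split_ifs with h <;> nlinarith [hp]

lemma sgn_symmDiff_other {j k : Fin n} (hjk : j ≠ k) (C : Finset (Fin n)) :
    sgn k (symmDiff {j} C) =
      (if j < k then -1 else 1) *
        (-((-1:ℝ)^(C.filter (· < k)).card * (if k ∈ C then -1 else 1))) := by
  rw [sgn_eq]
  have h1 : (symmDiff {j} C).filter (· < k) = symmDiff (({j} : Finset (Fin n)).filter (· < k)) (C.filter (· < k)) :=
    filter_symmDiff_single j k C
  have h2 : k ∈ symmDiff {j} C ↔ k ∈ C := by
    simp only [Finset.mem_symmDiff, Finset.mem_singleton]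
    constructor
    · rintro (⟨rfl, _⟩ | ⟨h, _⟩)
      · exact absurd rfl hjk
      · exact h
    · intro h
      exact Or.inr ⟨h, fun hk => hjk hk.symm⟩
  rw [h1, filter_single_lt]
  by_cases hlt : j < k
  · rw [if_pos hlt, if_pos hlt, neg_one_pow_symmDiff_single]
    by_cases h : k ∈ C
    · rw [if_pos (h2.mpr h), if_pos h]; ring
    · rw [if_neg (by simpa [h2]), if_neg h]; ring
  · rw [if_neg hlt, if_neg hlt]
    have : symmDiff (∅ : Finset (Fin n)) (C.filter (· < k)) = C.filter (· < k) := by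
      simp
    rw [this]
    by_cases h : k ∈ C
    · rw [if_pos (h2.mpr h), if_pos h]; ring
    · rw [if_neg (by simpa [h2]), if_neg h]; ring

lemma sgn_anticomm {j k : Fin n} (hjk : j ≠ k) (C : Finset (Fin n)) :
    sgn j C * sgn k (symmDiff {j} C) = -(sgn k C * sgn j (symmDiff {k} C)) := by
  rw [sgn_symmDiff_other hjk, sgn_symmDiff_other hjk.symm, sgn_eq j C, sgn_eq k C]
  rcases lt_trichotomy j k with h | h | h
  · rw [if_pos h, if_neg (asymm h)]; ring
  · exact absurd h hjk
  · rw [if_neg (asymm h), if_pos h]; ring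

end Aux
namespace Aux2
open Cliff Finset Aux

variable {n : ℕ}

/-- Left Clifford multiplication by `e j`, as a continuous linear map. -/
def Ld (j : Fin n) : Cl n →L[ℝ] Cl n :=
  LinearMap.toContinuousLinearMap
    { toFun := fun f C => sgn j C * f (symmDiff {j} C)
      map_add' := by
        intro f g; funext C; simp [mul_add]
      map_smul' := by
        intro c f; funext C; simp [Pi.smul_apply, smul_eq_mul]; ring }

lemma Ld_apply (j : Fin n) (f : Cl n) (C : Finset (Fin n)) :
    Ld j f C = sgn j C * f (symmDiff {j} C) := rfl

lemma cmul_e_eq_Ld (j : Fin n) (f : Cl n) : cmul (e j) f = Ld j f := by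
  rw [cmul_e]; rfl

lemma Ld_Ld_self (j : Fin n) (f : Cl n) : Ld j (Ld j f) = -f := by
  funext C
  rw [Pi.neg_apply, Ld_apply, Ld_apply, symmDiff_symmDiff_cancel_left _ _, ← mul_assoc,
    sgn_mul_sgn_symmDiff]
  ring

lemma Ld_comm {j k : Fin n} (hjk : j ≠ k) (f : Cl n) :
    Ld j (Ld k f) = -(Ld k (Ld j f)) := by
  funext C
  have hs : symmDiff {k} (symmDiff {j} C) = symmDiff {j} (symmDiff {k} C) := by
    rw [← symmDiff_assoc, ← symmDiff_assoc, symmDiff_comm ({k} : Finset (Fin n))]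
  rw [Pi.neg_apply, Ld_apply, Ld_apply, Ld_apply, Ld_apply, hs, ← mul_assoc, ← mul_assoc,
    sgn_anticomm hjk]
  ring

/-- the reindexing equivalence `C ↦ {j} ∆ C`. -/
def tEquiv (j : Fin n) : Finset (Fin n) ≃ Finset (Fin n) where
  toFun := fun C => symmDiff {j} C
  invFun := fun C => symmDiff {j} C
  left_inv := fun C => symmDiff_symmDiff_cancel_left _ _
  right_inv := fun C => symmDiff_symmDiff_cancel_left _ _

lemma ip_Ld_Ld (j : Fin n) (f g : Cl n) : ip (Ld j f) (Ld j g) = ip f g := by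
  rw [ip, ip]
  refine Fintype.sum_equiv (tEquiv j) _ _ (fun C => ?_)
  show Ld j f C * Ld j g C = f (symmDiff {j} C) * g (symmDiff {j} C)
  rw [Ld_apply, Ld_apply]
  have h : sgn j C * f (symmDiff {j} C) * (sgn j C * g (symmDiff {j} C))
      = (sgn j C * sgn j C) * (f (symmDiff {j} C) * g (symmDiff {j} C)) := by ring
  rw [h, sgn_mul_self, one_mul]

lemma ip_Ld_left (j : Fin n) (f g : Cl n) : ip (Ld j f) g = - ip f (Ld j g) := by
  have h : g = -(Ld j (Ld j g)) := by rw [Ld_Ld_self, neg_neg]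
  calc ip (Ld j f) g = ip (Ld j f) (-(Ld j (Ld j g))) := by rw [← h]
    _ = - ip (Ld j f) (Ld j (Ld j g)) := ip_neg_right _ _
    _ = - ip f (Ld j g) := by rw [ip_Ld_Ld]

lemma ip_Ld_right (j : Fin n) (f g : Cl n) : ip f (Ld j g) = - ip (Ld j f) g := by
  rw [ip_Ld_left]; ring

lemma ip_Ld_Ld_of_ne {j j0 : Fin n} (hjk : j ≠ j0) (a b : Cl n) :
    ip (Ld j a) (Ld j0 b) = ip (Ld j0 (Ld j b)) a := by
  calc ip (Ld j a) (Ld j0 b) = - ip a (Ld j (Ld j0 b)) := ip_Ld_left _ _ _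
    _ = - ip a (-(Ld j0 (Ld j b))) := by rw [Ld_comm hjk]
    _ = ip a (Ld j0 (Ld j b)) := by rw [ip_neg_right, neg_neg]
    _ = ip (Ld j0 (Ld j b)) a := ip_comm _ _

lemma ip_M_antisymm {j j0 : Fin n} (hjk : j ≠ j0) (a b : Cl n) :
    ip (Ld j0 (Ld j a)) b = - ip (Ld j0 (Ld j b)) a := by
  calc ip (Ld j0 (Ld j a)) b = - ip (Ld j a) (Ld j0 b) := by
        rw [ip_Ld_left j0, ip_comm, ip_Ld_right]
    _ = - ip (Ld j0 (Ld j b)) a := by rw [ip_Ld_Ld_of_ne hjk]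

/-- sum identity `Σ_j L_j L_{j0} p_j = −(L_{j0} Σ_j L_j p_j + 2 p_{j0})`. -/
lemma sum_Ld_Ld (j0 : Fin n) (p : Fin n → Cl n) :
    ∑ j : Fin n, Ld j (Ld j0 (p j))
      = -(Ld j0 (∑ j : Fin n, Ld j (p j)) + (2:ℝ) • p j0) := by
  rw [map_sum]
  rw [← Finset.add_sum_erase _ (fun j => Ld j (Ld j0 (p j))) (Finset.mem_univ j0)]
  rw [← Finset.add_sum_erase _ (fun j => Ld j0 (Ld j (p j))) (Finset.mem_univ j0)]
  rw [Ld_Ld_self]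
  rw [Finset.sum_congr rfl (fun j hj => Ld_comm (Finset.ne_of_mem_erase hj) (p j))]
  rw [Finset.sum_neg_distrib]
  have h2 : (2:ℝ) • p j0 = p j0 + p j0 := two_smul ℝ _
  rw [h2]
  abel

/-- expansions of `normSq`. -/
lemma normSq_sub_smul (a b : Cl n) (c : ℝ) :
    normSq (a - c • b) = normSq a - 2*(c * ip a b) + c^2 * normSq b := by
  simp only [normSq_eq_ip, ip_sub_left, ip_sub_right, ip_smul_left, ip_smul_right, ip_comm b a]
  ring

lemma normSq_add_smul (a b : Cl n) (c : ℝ) :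
    normSq (a + c • b) = normSq a + 2*(c * ip a b) + c^2 * normSq b := by
  simp only [normSq_eq_ip, ip_add_left, ip_add_right, ip_smul_left, ip_smul_right, ip_comm b a]
  ring

lemma normSq_neg (a : Cl n) : normSq (-a) = normSq a := by
  simp [Cliff.normSq]

end Aux2
namespace Aux3
open Cliff Finset Aux Aux2

variable {n : ℕ}

/-- `ip a ·` as a continuous linear map. -/
def ipc (a : Cl n) : Cl n →L[ℝ] ℝ :=
  LinearMap.toContinuousLinearMap
    { toFun := fun b => ip a b
      map_add' := fun f g => ip_add_right a f g
      map_smul' := fun c f => by simp [ip_smul_right] }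

@[simp] lemma ipc_apply (a b : Cl n) : ipc a b = ip a b := rfl

lemma hasFDerivAt_ip {f g : (Fin n → ℝ) → Cl n} {f' g' : (Fin n → ℝ) →L[ℝ] Cl n}
    {x : Fin n → ℝ} (hf : HasFDerivAt f f' x) (hg : HasFDerivAt g g' x) :
    HasFDerivAt (fun y => ip (f y) (g y)) ((ipc (g x)).comp f' + (ipc (f x)).comp g') x := by
  have H := HasFDerivAt.sum (u := (Finset.univ : Finset (Finset (Fin n))))
    (fun A _ => (((ContinuousLinearMap.proj (R := ℝ) (φ := fun _ : Finset (Fin n) => ℝ) A).hasFDerivAt.comp x hf).mul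
      ((ContinuousLinearMap.proj (R := ℝ) (φ := fun _ : Finset (Fin n) => ℝ) A).hasFDerivAt.comp x hg)))
  have heq : (fun y => ip (f y) (g y))
      = fun y => ∑ A : Finset (Fin n),
          (ContinuousLinearMap.proj (R := ℝ) (φ := fun _ : Finset (Fin n) => ℝ) A) (f y)
            * (ContinuousLinearMap.proj (R := ℝ) (φ := fun _ : Finset (Fin n) => ℝ) A) (g y) := by
    funext y; rfl
  rw [heq]
  refine (H.congr_of_eventuallyEq (Filter.Eventually.of_forall fun y => by simp [Finset.sum_apply])).congr_fderiv ?_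
  ext v
  simp only [ContinuousLinearMap.add_apply, ContinuousLinearMap.coe_comp', Function.comp_apply,
    ContinuousLinearMap.sum_apply, ContinuousLinearMap.smul_apply, ContinuousLinearMap.proj_apply,
    ipc_apply, smul_eq_mul]
  rw [ip, ip, Finset.sum_add_distrib, add_comm]

end Aux3
namespace Aux4
open Cliff Finset Aux Aux2 Aux3

variable {n : ℕ}

lemma one_le_inf : (1 : WithTop ℕ∞) ≤ ((⊤:ℕ∞) : WithTop ℕ∞) := by
  exact_mod_cast (le_top : (1:ℕ∞) ≤ ⊤)

lemma cd_fderiv {E F : Type*} [NormedAddCommGroup E] [NormedSpace ℝ E]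
    [NormedAddCommGroup F] [NormedSpace ℝ F] {f : E → F} (hf : ContDiff ℝ (⊤:ℕ∞) f) :
    ContDiff ℝ (⊤:ℕ∞) (fderiv ℝ f) := (contDiff_infty_iff_fderiv.mp hf).2

lemma cd_diff {E F : Type*} [NormedAddCommGroup E] [NormedSpace ℝ E]
    [NormedAddCommGroup F] [NormedSpace ℝ F] {f : E → F} (hf : ContDiff ℝ (⊤:ℕ∞) f) :
    Differentiable ℝ f := (contDiff_infty_iff_fderiv.mp hf).1

lemma contDiff_ip {f g : (Fin n → ℝ) → Cl n} (hf : ContDiff ℝ (⊤:ℕ∞) f)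
    (hg : ContDiff ℝ (⊤:ℕ∞) g) :
    ContDiff ℝ (⊤:ℕ∞) (fun y => ip (f y) (g y)) := by
  have h : (fun y => ip (f y) (g y))
      = fun y => ∑ A : Finset (Fin n), f y A * g y A := rfl
  rw [h]
  apply ContDiff.sum
  intro A _
  exact (((ContinuousLinearMap.proj (R := ℝ) (φ := fun _ : Finset (Fin n) => ℝ) A).contDiff).comp hf).mul
    (((ContinuousLinearMap.proj (R := ℝ) (φ := fun _ : Finset (Fin n) => ℝ) A).contDiff).comp hg)

lemma continuous_normSq {f : (Fin n → ℝ) → Cl n} (hf : Continuous f) :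
    Continuous (fun y => normSq (f y)) := by
  have h : (fun y => normSq (f y)) = fun y => ∑ A : Finset (Fin n), (f y A)^2 := rfl
  rw [h]
  exact continuous_finset_sum _ (fun A _ => ((continuous_apply A).comp hf).pow 2)

/-- the weight function `e^{-x_{j0}^2}`. -/
def Wt (j0 : Fin n) : (Fin n → ℝ) → ℝ := fun x => Real.exp (-(x j0 * x j0))

lemma Wt_pos (j0 : Fin n) (x : Fin n → ℝ) : 0 < Wt j0 x := Real.exp_pos _

lemma contDiff_Wt (j0 : Fin n) : ContDiff ℝ (⊤:ℕ∞) (Wt j0) := by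
  apply Real.contDiff_exp.comp
  exact (((ContinuousLinearMap.proj (R := ℝ) (φ := fun _ : Fin n => ℝ) j0).contDiff).mul
    ((ContinuousLinearMap.proj (R := ℝ) (φ := fun _ : Fin n => ℝ) j0).contDiff)).neg

lemma hasFDerivAt_Wt (j0 : Fin n) (x : Fin n → ℝ) :
    HasFDerivAt (Wt j0)
      ((-2 * x j0 * Wt j0 x) • ContinuousLinearMap.proj (R := ℝ) (φ := fun _ : Fin n => ℝ) j0) x := by
  have h0 : HasFDerivAt (fun y : Fin n → ℝ => y j0)
      (ContinuousLinearMap.proj (R := ℝ) (φ := fun _ : Fin n => ℝ) j0) x :=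
    (ContinuousLinearMap.proj (R := ℝ) (φ := fun _ : Fin n => ℝ) j0).hasFDerivAt
  have h1 := ((h0.mul h0).neg).exp
  refine h1.congr_fderiv ?_
  ext v
  simp only [ContinuousLinearMap.smul_apply, ContinuousLinearMap.proj_apply,
    ContinuousLinearMap.neg_apply, ContinuousLinearMap.add_apply, smul_eq_mul, Wt,
    Pi.neg_apply, Pi.mul_apply]
  ring

lemma schwarz {u : (Fin n → ℝ) → Cl n} (hu : ContDiff ℝ (⊤:ℕ∞) u) (x : Fin n → ℝ)
    (v w : Fin n → ℝ) :
    fderiv ℝ (fderiv ℝ u) x v w = fderiv ℝ (fderiv ℝ u) x w v :=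
  second_derivative_symmetric (fun y => ((cd_diff hu) y).hasFDerivAt)
    (((cd_diff (cd_fderiv hu)) x).hasFDerivAt) v w

lemma hasFDerivAt_pd {u : (Fin n → ℝ) → Cl n} (hu : ContDiff ℝ (⊤:ℕ∞) u) (k : Fin n)
    (x : Fin n → ℝ) :
    HasFDerivAt (Cliff.pd k u)
      ((ContinuousLinearMap.apply ℝ (Cl n) (Pi.single k 1)).comp (fderiv ℝ (fderiv ℝ u) x)) x := by
  have hd : DifferentiableAt ℝ (fderiv ℝ u) x :=
    (cd_diff (cd_fderiv hu)).differentiableAt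
  exact ((ContinuousLinearMap.apply ℝ (Cl n) (Pi.single k 1)).hasFDerivAt).comp x hd.hasFDerivAt

lemma contDiff_pd {u : (Fin n → ℝ) → Cl n} (hu : ContDiff ℝ (⊤:ℕ∞) u) (k : Fin n) :
    ContDiff ℝ (⊤:ℕ∞) (Cliff.pd k u) :=
  (cd_fderiv hu).clm_apply contDiff_const

lemma pd_zero_outside {u : (Fin n → ℝ) → Cl n} {x : Fin n → ℝ} (hx : x ∉ tsupport u)
    (k : Fin n) : Cliff.pd k u x = 0 := by
  show fderiv ℝ u x (Pi.single k 1) = 0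
  rw [fderiv_of_notMem_tsupport ℝ hx]
  rfl

lemma fderiv2_zero_outside {u : (Fin n → ℝ) → Cl n} {x : Fin n → ℝ} (hx : x ∉ tsupport u) :
    fderiv ℝ (fderiv ℝ u) x = 0 := by
  have hev : fderiv ℝ u =ᶠ[nhds x] 0 := by
    have hop : (tsupport u)ᶜ ∈ nhds x := (isClosed_tsupport u).isOpen_compl.mem_nhds hx
    filter_upwards [hop] with y hy
    exact fderiv_of_notMem_tsupport ℝ hy
  rw [hev.fderiv_eq]
  exact fderiv_const_apply 0

/-- Key: the integral of the derivative of a smooth compactly supported function vanishes. -/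
lemma integral_fderiv_eq_zero {F : (Fin n → ℝ) → ℝ} (hF : ContDiff ℝ (⊤:ℕ∞) F)
    (hFc : HasCompactSupport F) (v : Fin n → ℝ) :
    Integrable (fun x => fderiv ℝ F x v) (volume : Measure (Fin n → ℝ)) ∧
      ∫ x, fderiv ℝ F x v = 0 := by
  have hFd : Differentiable ℝ F := cd_diff hF
  have hcont : Continuous (fun x => fderiv ℝ F x v) :=
    (ContinuousLinearMap.apply ℝ ℝ v).continuous.comp (hF.continuous_fderiv (by simp))
  have hsupp : HasCompactSupport (fun x => fderiv ℝ F x v) := hFc.fderiv_apply ℝ v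
  have hint : Integrable (fun x => fderiv ℝ F x v) := hcont.integrable_of_hasCompactSupport hsupp
  refine ⟨hint, ?_⟩
  have h := integral_mul_fderiv_eq_neg_fderiv_mul_of_integrable
    (f := F) (g := fun _ => (1:ℝ)) (v := v) (μ := (volume : Measure (Fin n → ℝ)))
    (by simpa using hint)
    (by simp)
    (by simpa using hF.continuous.integrable_of_hasCompactSupport hFc)
    (fun x _ => hFd x) (fun x _ => differentiableAt_const (1:ℝ))
  simp only [fderiv_const_apply, mul_one, ContinuousLinearMap.zero_apply, mul_zero] at h
  have h0 : (0:ℝ) = ∫ (_ : Fin n → ℝ), (0:ℝ) := by simp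
  rw [← h0] at h  -- h : 0 = - ∫ fderiv F x v  (roughly)
  linarith [h]

end Aux4
namespace Main
open Cliff Finset Aux Aux2 Aux3 Aux4

variable {n : ℕ}

lemma cmul_smul_left (c : ℝ) (f g : Cl n) : cmul (c • f) g = c • cmul f g := by
  funext C
  simp only [cmul, Pi.smul_apply, smul_eq_mul, Finset.mul_sum]
  exact Finset.sum_congr rfl (fun A _ => by ring)

lemma pds_phi (j0 j : Fin n) (x : Fin n → ℝ) :
    Cliff.pds j (fun y => (y j0)^2) x = if j = j0 then 2 * x j0 else 0 := by
  have hsq : (fun y : Fin n → ℝ => (y j0)^2) = fun y => y j0 * y j0 := by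
    funext y; ring
  have h0 : HasFDerivAt (fun y : Fin n → ℝ => y j0)
      (ContinuousLinearMap.proj (R := ℝ) (φ := fun _ : Fin n => ℝ) j0) x :=
    (ContinuousLinearMap.proj (R := ℝ) (φ := fun _ : Fin n => ℝ) j0).hasFDerivAt
  have h1 := h0.mul h0
  rw [Cliff.pds, hsq, (HasFDerivAt.fderiv (f := fun y : Fin n → ℝ => y j0 * y j0) h1)]
  simp only [ContinuousLinearMap.add_apply, ContinuousLinearMap.smul_apply,
    ContinuousLinearMap.proj_apply, smul_eq_mul]
  by_cases h : j = j0
  · subst h; rw [if_pos rfl, Pi.single_eq_same]; ring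
  · rw [if_neg h, Pi.single_eq_of_ne (fun hc => h hc.symm)]; ring

lemma Dgrad_phi (j0 : Fin n) (x : Fin n → ℝ) :
    Cliff.Dgrad (fun y => (y j0)^2) x = (2 * x j0) • Cliff.e j0 := by
  rw [Cliff.Dgrad, Cliff.vec]
  have h : ∀ j : Fin n, (Cliff.pds j (fun y => (y j0)^2) x) • Cliff.e j
      = if j = j0 then (2 * x j0) • Cliff.e j0 else 0 := by
    intro j
    rw [pds_phi]
    split_ifs with hj
    · subst hj; rfl
    · exact zero_smul ℝ _
  rw [Finset.sum_congr rfl (fun j _ => h j), Finset.sum_ite_eq' Finset.univ j0]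
  simp

lemma delta_eq {u : (Fin n → ℝ) → Cl n} (j0 : Fin n) (x : Fin n → ℝ) :
    Cliff.delta (fun y => (y j0)^2) u x = Cliff.Dirac u x - (2 * x j0) • (Ld j0 (u x)) := by
  show Cliff.Dirac u x - cmul (Cliff.Dgrad (fun y => (y j0)^2) x) (u x) = _
  rw [Dgrad_phi, cmul_smul_left, cmul_e_eq_Ld]

lemma Dirac_sum (v : (Fin n → ℝ) → Cl n) (x : Fin n → ℝ) :
    Cliff.Dirac v x = ∑ j : Fin n, Ld j (Cliff.pd j v x) := by
  rw [Cliff.Dirac]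
  exact Finset.sum_congr rfl (fun j _ => by rw [cmul_e_eq_Ld])

lemma pd_Ld {u : (Fin n → ℝ) → Cl n} (hu : ContDiff ℝ (⊤:ℕ∞) u) (j0 j : Fin n)
    (x : Fin n → ℝ) :
    Cliff.pd j (fun y => cmul (Cliff.e j0) (u y)) x = Ld j0 (Cliff.pd j u x) := by
  have h : (fun y => cmul (Cliff.e j0) (u y)) = fun y => Ld j0 (u y) :=
    funext (fun y => cmul_e_eq_Ld j0 (u y))
  rw [Cliff.pd, h]
  have hD : HasFDerivAt (fun y => Ld j0 (u y)) ((Ld j0).comp (fderiv ℝ u x)) x :=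
    (Ld j0).hasFDerivAt.comp x ((cd_diff hu) x).hasFDerivAt
  rw [hD.fderiv]
  rfl

lemma fderiv_F1 {u : (Fin n → ℝ) → Cl n} (hu : ContDiff ℝ (⊤:ℕ∞) u) (j0 : Fin n)
    (x : Fin n → ℝ) :
    fderiv ℝ (fun y => (y j0 * ip (u y) (u y)) * Wt j0 y) x (Pi.single j0 1)
      = (ip (u x) (u x) + 2*(x j0 * ip (Cliff.pd j0 u x) (u x))
          - 2*((x j0 * x j0) * ip (u x) (u x))) * Wt j0 x := by
  have hux : HasFDerivAt u (fderiv ℝ u x) x := ((cd_diff hu) x).hasFDerivAt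
  have h0 : HasFDerivAt (fun y : Fin n → ℝ => y j0)
      (ContinuousLinearMap.proj (R := ℝ) (φ := fun _ : Fin n => ℝ) j0) x :=
    (ContinuousLinearMap.proj (R := ℝ) (φ := fun _ : Fin n => ℝ) j0).hasFDerivAt
  have hip := hasFDerivAt_ip hux hux
  have hF := (h0.mul hip).mul (hasFDerivAt_Wt j0 x)
  rw [(HasFDerivAt.fderiv (f := fun y => (y j0 * ip (u y) (u y)) * Wt j0 y) hF)]
  simp only [ContinuousLinearMap.add_apply, ContinuousLinearMap.smul_apply,
    ContinuousLinearMap.coe_comp', Function.comp_apply, ContinuousLinearMap.proj_apply,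
    ipc_apply, smul_eq_mul, Pi.single_eq_same, Pi.mul_apply]
  simp only [Cliff.pd]
  rw [ip_comm (fderiv ℝ u x (Pi.single j0 1)) (u x)]
  ring

lemma fderiv_F23 {u : (Fin n → ℝ) → Cl n} (hu : ContDiff ℝ (⊤:ℕ∞) u) (j0 j k : Fin n)
    (x : Fin n → ℝ) (v : Fin n → ℝ) :
    fderiv ℝ (fun y => ip (Ld j0 (Ld j (u y))) (Cliff.pd k u y) * Wt j0 y) x v
      = (ip (Cliff.pd k u x) (Ld j0 (Ld j (fderiv ℝ u x v)))
          + ip (Ld j0 (Ld j (u x))) (fderiv ℝ (fderiv ℝ u) x v (Pi.single k 1))) * Wt j0 x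
        + ip (Ld j0 (Ld j (u x))) (Cliff.pd k u x) * ((-2 * x j0 * Wt j0 x) * v j0) := by
  have hux : HasFDerivAt u (fderiv ℝ u x) x := ((cd_diff hu) x).hasFDerivAt
  have hM : HasFDerivAt (fun y => Ld j0 (Ld j (u y)))
      (((Ld j0).comp (Ld j)).comp (fderiv ℝ u x)) x :=
    (((Ld j0).comp (Ld j)).hasFDerivAt).comp x hux
  have hpd := hasFDerivAt_pd hu k x
  have hF := (hasFDerivAt_ip hM hpd).mul (hasFDerivAt_Wt j0 x)
  rw [(HasFDerivAt.fderiv (f := fun y => ip (Ld j0 (Ld j (u y))) (Cliff.pd k u y) * Wt j0 y) hF)]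
  simp only [ContinuousLinearMap.add_apply, ContinuousLinearMap.smul_apply,
    ContinuousLinearMap.coe_comp', Function.comp_apply, ContinuousLinearMap.proj_apply,
    ContinuousLinearMap.apply_apply, ipc_apply, smul_eq_mul]
  ring

end Main
namespace Main
open Cliff Finset Aux Aux2 Aux3 Aux4

variable {n : ℕ}

lemma master {u : (Fin n → ℝ) → Cl n} (hu : ContDiff ℝ (⊤:ℕ∞) u) (j0 : Fin n) (x : Fin n → ℝ) :
    normSq (Cliff.delta (fun y => (y j0)^2) u x) * Wt j0 x
      = normSq (Cliff.Dirac (fun y => cmul (Cliff.e j0) (u y)) x) * Wt j0 x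
        + 2 * (normSq (u x) * Wt j0 x)
        + ((-2) * fderiv ℝ (fun y => (y j0 * ip (u y) (u y)) * Wt j0 y) x (Pi.single j0 1)
          + (-2) * ∑ j ∈ Finset.univ.erase j0,
              (fderiv ℝ (fun y => ip (Ld j0 (Ld j (u y))) (Cliff.pd j0 u y) * Wt j0 y) x
                  (Pi.single j 1)
               - fderiv ℝ (fun y => ip (Ld j0 (Ld j (u y))) (Cliff.pd j u y) * Wt j0 y) x
                  (Pi.single j0 1))) := by
  have hDe : Cliff.Dirac (fun y => cmul (Cliff.e j0) (u y)) x
      = -(Ld j0 (Cliff.Dirac u x) + (2:ℝ) • Cliff.pd j0 u x) := by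
    rw [Dirac_sum]
    rw [Finset.sum_congr rfl (fun j _ => by rw [pd_Ld hu j0 j x])]
    rw [sum_Ld_Ld j0 (fun j => Cliff.pd j u x), ← Dirac_sum]
  have hcross1 : ip (Cliff.Dirac u x) (Ld j0 (u x))
      = ip (Cliff.pd j0 u x) (u x)
        + ∑ j ∈ Finset.univ.erase j0, ip (Ld j0 (Ld j (u x))) (Cliff.pd j u x) := by
    rw [Dirac_sum, ip_sum_left, ← Finset.add_sum_erase _ _ (Finset.mem_univ j0)]
    congr 1
    · exact ip_Ld_Ld j0 _ _
    · exact Finset.sum_congr rfl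
        (fun j hj => ip_Ld_Ld_of_ne (Finset.ne_of_mem_erase hj) _ _)
  have hcross2 : ip (Ld j0 (Cliff.Dirac u x)) (Cliff.pd j0 u x)
      = -(ip (Cliff.pd j0 u x) (Cliff.pd j0 u x))
        + ∑ j ∈ Finset.univ.erase j0, ip (Ld j0 (Ld j (Cliff.pd j u x))) (Cliff.pd j0 u x) := by
    rw [Dirac_sum, map_sum, ip_sum_left, ← Finset.add_sum_erase _ _ (Finset.mem_univ j0)]
    congr 1
    rw [Ld_Ld_self, ip_neg_left]
  have hsum : ∀ j ∈ Finset.univ.erase j0,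
      (fderiv ℝ (fun y => ip (Ld j0 (Ld j (u y))) (Cliff.pd j0 u y) * Wt j0 y) x (Pi.single j 1)
        - fderiv ℝ (fun y => ip (Ld j0 (Ld j (u y))) (Cliff.pd j u y) * Wt j0 y) x
            (Pi.single j0 1))
      = 2 * Wt j0 x * ip (Ld j0 (Ld j (Cliff.pd j u x))) (Cliff.pd j0 u x)
        + (2 * (x j0 * Wt j0 x)) * ip (Ld j0 (Ld j (u x))) (Cliff.pd j u x) := by
    intro j hj
    have hjne : j ≠ j0 := Finset.ne_of_mem_erase hj
    rw [fderiv_F23 hu j0 j j0 x (Pi.single j 1), fderiv_F23 hu j0 j j x (Pi.single j0 1)]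
    rw [Pi.single_eq_same, Pi.single_eq_of_ne (show j0 ≠ j from fun h => hjne h.symm)]
    rw [schwarz hu x (Pi.single j 1) (Pi.single j0 1)]
    have h1 : ip (Cliff.pd j0 u x) (Ld j0 (Ld j (fderiv ℝ u x (Pi.single j 1))))
        = ip (Ld j0 (Ld j (Cliff.pd j u x))) (Cliff.pd j0 u x) := by
      rw [ip_comm]; rfl
    have h2 : ip (Cliff.pd j u x) (Ld j0 (Ld j (fderiv ℝ u x (Pi.single j0 1))))
        = -(ip (Ld j0 (Ld j (Cliff.pd j u x))) (Cliff.pd j0 u x)) := by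
      rw [ip_comm]
      have := ip_M_antisymm (j := j) (j0 := j0) hjne
        (fderiv ℝ u x (Pi.single j0 1)) (Cliff.pd j u x)
      rw [show Ld j0 (Ld j (fderiv ℝ u x (Pi.single j0 1)))
          = Ld j0 (Ld j (Cliff.pd j0 u x)) from rfl] at this ⊢
      rw [this]
      rfl
    rw [h1, h2]
    ring
  rw [delta_eq j0 x, normSq_sub_smul, hDe, normSq_neg, normSq_add_smul]
  rw [Finset.sum_congr rfl hsum, Finset.sum_add_distrib, ← Finset.mul_sum, ← Finset.mul_sum]
  rw [fderiv_F1 hu j0 x]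
  simp only [normSq_eq_ip, ip_Ld_Ld, hcross1, hcross2]

  ring
end Main
namespace Main
open Cliff Finset Aux Aux2 Aux3 Aux4

variable {n : ℕ}

lemma normSq_zero : Cliff.normSq (0 : Cl n) = 0 := by simp [Cliff.normSq]

lemma normSq_nonneg (f : Cl n) : 0 ≤ Cliff.normSq f :=
  Finset.sum_nonneg (fun A _ => sq_nonneg _)

lemma Dirac_zero_outside {u : (Fin n → ℝ) → Cl n} {x : Fin n → ℝ}
    (hx : x ∉ tsupport u) : Cliff.Dirac u x = 0 := by
  rw [Dirac_sum, Finset.sum_congr rfl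
    (fun j _ => by rw [pd_zero_outside hx j, map_zero])]
  simp

lemma Dirac_cmul_eq {u : (Fin n → ℝ) → Cl n} (hsm : ContDiff ℝ (⊤:ℕ∞) u) (j0 : Fin n) :
    (fun x => Cliff.Dirac (fun y => cmul (Cliff.e j0) (u y)) x)
      = fun x => -(Ld j0 (Cliff.Dirac u x) + (2:ℝ) • Cliff.pd j0 u x) := by
  funext x
  rw [Dirac_sum, Finset.sum_congr rfl (fun j _ => by rw [pd_Ld hsm j0 j x]),
    sum_Ld_Ld j0 (fun j => Cliff.pd j u x), ← Dirac_sum]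

lemma main_aux {u : (Fin n → ℝ) → Cl n} (hsm : ContDiff ℝ (⊤:ℕ∞) u)
    (hcs : HasCompactSupport u) (j0 : Fin n) :
    ∫ x, normSq (Cliff.delta (fun y => (y j0)^2) u x) * Wt j0 x
      = (∫ x, normSq (Cliff.Dirac (fun y => cmul (Cliff.e j0) (u y)) x) * Wt j0 x)
        + 2 * ∫ x, normSq (u x) * Wt j0 x := by
  have hWc : Continuous (Wt j0) := (contDiff_Wt j0).continuous
  have hpdc : ∀ k : Fin n, Continuous (Cliff.pd k u) := fun k => (contDiff_pd hsm k).continuous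
  have hDuc : Continuous (fun x => Cliff.Dirac u x) := by
    have h : (fun x => Cliff.Dirac u x) = fun x => ∑ j : Fin n, Ld j (Cliff.pd j u x) :=
      funext (fun x => Dirac_sum u x)
    rw [h]
    exact continuous_finset_sum _ (fun j _ => (Ld j).continuous.comp (hpdc j))
  have hIR : Integrable
      (fun x => normSq (Cliff.Dirac (fun y => cmul (Cliff.e j0) (u y)) x) * Wt j0 x) := by
    have hc : Continuous (fun x => Cliff.Dirac (fun y => cmul (Cliff.e j0) (u y)) x) := by
      rw [Dirac_cmul_eq hsm j0]
      exact (((Ld j0).continuous.comp hDuc).add ((hpdc j0).const_smul (2:ℝ))).neg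
    apply Continuous.integrable_of_hasCompactSupport ((continuous_normSq hc).mul hWc)
    apply HasCompactSupport.intro hcs
    intro x hx
    have h0 : Cliff.Dirac (fun y => cmul (Cliff.e j0) (u y)) x = 0 := by
      have := congrFun (Dirac_cmul_eq hsm j0) x
      rw [this, Dirac_zero_outside hx, pd_zero_outside hx, map_zero]
      simp
    simp only [Pi.mul_apply]
    rw [h0, normSq_zero, zero_mul]
  have hIN : Integrable (fun x => normSq (u x) * Wt j0 x) := by
    apply Continuous.integrable_of_hasCompactSupport
      ((continuous_normSq hsm.continuous).mul hWc)
    apply HasCompactSupport.intro hcs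
    intro x hx
    simp only [Pi.mul_apply]
    rw [image_eq_zero_of_notMem_tsupport hx, normSq_zero, zero_mul]
  have hF1s : ContDiff ℝ (⊤:ℕ∞) (fun y => (y j0 * ip (u y) (u y)) * Wt j0 y) :=
    (((ContinuousLinearMap.proj (R := ℝ) (φ := fun _ : Fin n => ℝ) j0).contDiff).mul
      (contDiff_ip hsm hsm)).mul (contDiff_Wt j0)
  have hF1c : HasCompactSupport (fun y => (y j0 * ip (u y) (u y)) * Wt j0 y) := by
    apply HasCompactSupport.intro hcs
    intro x hx
    beta_reduce
    rw [image_eq_zero_of_notMem_tsupport hx]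
    simp [ip]
  have hF23s : ∀ j k : Fin n,
      ContDiff ℝ (⊤:ℕ∞) (fun y => ip (Ld j0 (Ld j (u y))) (Cliff.pd k u y) * Wt j0 y) :=
    fun j k => (contDiff_ip ((((Ld j0).comp (Ld j)).contDiff).comp hsm)
      (contDiff_pd hsm k)).mul (contDiff_Wt j0)
  have hF23c : ∀ j k : Fin n,
      HasCompactSupport (fun y => ip (Ld j0 (Ld j (u y))) (Cliff.pd k u y) * Wt j0 y) := by
    intro j k
    apply HasCompactSupport.intro hcs
    intro x hx
    beta_reduce
    rw [image_eq_zero_of_notMem_tsupport hx]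
    simp [ip]
  have hfd1 := integral_fderiv_eq_zero hF1s hF1c (Pi.single j0 1)
  have hfd2 : ∀ j : Fin n,
      Integrable (fun x => fderiv ℝ
        (fun y => ip (Ld j0 (Ld j (u y))) (Cliff.pd j0 u y) * Wt j0 y) x (Pi.single j 1)) ∧
      ∫ x, fderiv ℝ
        (fun y => ip (Ld j0 (Ld j (u y))) (Cliff.pd j0 u y) * Wt j0 y) x (Pi.single j 1) = 0 :=
    fun j => integral_fderiv_eq_zero (hF23s j j0) (hF23c j j0) _
  have hfd3 : ∀ j : Fin n,
      Integrable (fun x => fderiv ℝ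
        (fun y => ip (Ld j0 (Ld j (u y))) (Cliff.pd j u y) * Wt j0 y) x (Pi.single j0 1)) ∧
      ∫ x, fderiv ℝ
        (fun y => ip (Ld j0 (Ld j (u y))) (Cliff.pd j u y) * Wt j0 y) x (Pi.single j0 1) = 0 :=
    fun j => integral_fderiv_eq_zero (hF23s j j) (hF23c j j) _
  have hSm_int : Integrable (fun x => ∑ j ∈ Finset.univ.erase j0,
      (fderiv ℝ (fun y => ip (Ld j0 (Ld j (u y))) (Cliff.pd j0 u y) * Wt j0 y) x (Pi.single j 1)
        - fderiv ℝ (fun y => ip (Ld j0 (Ld j (u y))) (Cliff.pd j u y) * Wt j0 y) x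
            (Pi.single j0 1))) :=
    integrable_finset_sum _ (fun j _ => ((hfd2 j).1.sub (hfd3 j).1))
  have hSm_zero : ∫ x, (∑ j ∈ Finset.univ.erase j0,
      (fderiv ℝ (fun y => ip (Ld j0 (Ld j (u y))) (Cliff.pd j0 u y) * Wt j0 y) x (Pi.single j 1)
        - fderiv ℝ (fun y => ip (Ld j0 (Ld j (u y))) (Cliff.pd j u y) * Wt j0 y) x
            (Pi.single j0 1))) = 0 := by
    rw [integral_finset_sum (Finset.univ.erase j0)
      (f := fun j x =>
        fderiv ℝ (fun y => ip (Ld j0 (Ld j (u y))) (Cliff.pd j0 u y) * Wt j0 y) x (Pi.single j 1)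
          - fderiv ℝ (fun y => ip (Ld j0 (Ld j (u y))) (Cliff.pd j u y) * Wt j0 y) x
              (Pi.single j0 1))
      (fun j _ => ((hfd2 j).1.sub (hfd3 j).1))]
    apply Finset.sum_eq_zero
    intro j _
    rw [integral_sub (hfd2 j).1 (hfd3 j).1, (hfd2 j).2, (hfd3 j).2, sub_zero]
  have hfun : (fun x => normSq (Cliff.delta (fun y => (y j0)^2) u x) * Wt j0 x)
      = fun x => normSq (Cliff.Dirac (fun y => cmul (Cliff.e j0) (u y)) x) * Wt j0 x
        + 2 * (normSq (u x) * Wt j0 x)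
        + ((-2) * fderiv ℝ (fun y => (y j0 * ip (u y) (u y)) * Wt j0 y) x (Pi.single j0 1)
          + (-2) * ∑ j ∈ Finset.univ.erase j0,
              (fderiv ℝ (fun y => ip (Ld j0 (Ld j (u y))) (Cliff.pd j0 u y) * Wt j0 y) x
                  (Pi.single j 1)
               - fderiv ℝ (fun y => ip (Ld j0 (Ld j (u y))) (Cliff.pd j u y) * Wt j0 y) x
                  (Pi.single j0 1))) := funext (master hsm j0)
  rw [hfun]
  rw [integral_add
    (f := fun x => normSq (Cliff.Dirac (fun y => cmul (Cliff.e j0) (u y)) x) * Wt j0 x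
      + 2 * (normSq (u x) * Wt j0 x))
    (g := fun x =>
      (-2) * fderiv ℝ (fun y => (y j0 * ip (u y) (u y)) * Wt j0 y) x (Pi.single j0 1)
        + (-2) * ∑ j ∈ Finset.univ.erase j0,
            (fderiv ℝ (fun y => ip (Ld j0 (Ld j (u y))) (Cliff.pd j0 u y) * Wt j0 y) x
                (Pi.single j 1)
             - fderiv ℝ (fun y => ip (Ld j0 (Ld j (u y))) (Cliff.pd j u y) * Wt j0 y) x
                (Pi.single j0 1)))
    (hIR.add (hIN.const_mul 2))
    ((hfd1.1.const_mul (-2)).add (hSm_int.const_mul (-2)))]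
  rw [integral_add
    (f := fun x => normSq (Cliff.Dirac (fun y => cmul (Cliff.e j0) (u y)) x) * Wt j0 x)
    (g := fun x => 2 * (normSq (u x) * Wt j0 x))
    hIR (hIN.const_mul 2)]
  rw [integral_add
    (f := fun x =>
      (-2) * fderiv ℝ (fun y => (y j0 * ip (u y) (u y)) * Wt j0 y) x (Pi.single j0 1))
    (g := fun x => (-2) * ∑ j ∈ Finset.univ.erase j0,
            (fderiv ℝ (fun y => ip (Ld j0 (Ld j (u y))) (Cliff.pd j0 u y) * Wt j0 y) x
                (Pi.single j 1)
             - fderiv ℝ (fun y => ip (Ld j0 (Ld j (u y))) (Cliff.pd j u y) * Wt j0 y) x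
                (Pi.single j0 1)))
    (hfd1.1.const_mul (-2)) (hSm_int.const_mul (-2))]
  rw [integral_const_mul, integral_const_mul, integral_const_mul, hfd1.2, hSm_zero]
  ring

end Main

open Aux Aux2 Aux3 Aux4 Main in
/-- the single quadratic weight `φ = x₁²`. For every test function
`u`: `‖Du − (Dφ)u‖²_φ = ‖D(e₁ u)‖²_φ + 2‖u‖²_φ`; in particular
`‖Du − (Dφ)u‖²_φ ≥ 2‖u‖²_φ`. -/
theorem dirac_single_quadratic_weight (n : ℕ) (hn : 0 < n)
    (Ω : Set (Fin n → ℝ)) (hΩ : Cliff.IsDomain Ω)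
    (φ : (Fin n → ℝ) → ℝ) (hφ : φ = fun x => (x ⟨0, hn⟩) ^ 2)
    (u : (Fin n → ℝ) → Cl n) (hu : Cliff.IsTest Ω u) :
    Cliff.wnorm Ω φ (Cliff.delta φ u) =
      Cliff.wnorm Ω φ
        (Cliff.Dirac (fun y => Cliff.cmul (Cliff.e ⟨0, hn⟩) (u y))) +
        2 * Cliff.wnorm Ω φ u ∧
    2 * Cliff.wnorm Ω φ u ≤ Cliff.wnorm Ω φ (Cliff.delta φ u) := by
  obtain ⟨hsm, hcs, hsupp⟩ := hu
  subst hφ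
  set j0 : Fin n := ⟨0, hn⟩ with hj0def
  have hout : ∀ x, x ∉ Ω → x ∉ tsupport u := fun x hx hc => hx (hsupp hc)
  have hz1 : ∀ x ∉ Ω, Cliff.delta (fun y => (y j0)^2) u x = 0 := by
    intro x hx
    rw [Main.delta_eq j0 x, Main.Dirac_zero_outside (hout x hx),
      image_eq_zero_of_notMem_tsupport (hout x hx)]
    simp
  have hz2 : ∀ x ∉ Ω, Cliff.Dirac (fun y => Cliff.cmul (Cliff.e j0) (u y)) x = 0 := by
    intro x hx
    rw [congrFun (Main.Dirac_cmul_eq hsm j0) x, Main.Dirac_zero_outside (hout x hx),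
      Aux4.pd_zero_outside (hout x hx)]
    simp
  have hz3 : ∀ x ∉ Ω, u x = 0 := fun x hx => image_eq_zero_of_notMem_tsupport (hout x hx)
  have hconv : ∀ (v : (Fin n → ℝ) → Cl n), (∀ x ∉ Ω, v x = 0) →
      Cliff.wnorm Ω (fun x => (x j0)^2) v = ∫ x, Cliff.normSq (v x) * Wt j0 x := by
    intro v hv
    rw [Cliff.wnorm]
    rw [MeasureTheory.setIntegral_eq_integral_of_forall_compl_eq_zero
      (fun x hx => by rw [hv x hx, Main.normSq_zero, zero_mul])]
    congr 1
    funext x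
    simp only [Wt]
    rw [pow_two]
  have hmain : Cliff.wnorm Ω (fun x => (x j0)^2)
        (Cliff.delta (fun x => (x j0)^2) u)
      = Cliff.wnorm Ω (fun x => (x j0)^2)
          (Cliff.Dirac (fun y => Cliff.cmul (Cliff.e j0) (u y)))
        + 2 * Cliff.wnorm Ω (fun x => (x j0)^2) u := by
    rw [hconv _ hz1, hconv _ hz2, hconv _ hz3]
    exact Main.main_aux hsm hcs j0
  refine ⟨hmain, ?_⟩
  have h0 : 0 ≤ Cliff.wnorm Ω (fun x => (x j0)^2)
      (Cliff.Dirac (fun y => Cliff.cmul (Cliff.e j0) (u y))) := by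
    rw [Cliff.wnorm]
    apply MeasureTheory.setIntegral_nonneg hΩ.1.measurableSet
    intro x _
    exact mul_nonneg (Main.normSq_nonneg _) (le_of_lt (Real.exp_pos _))
  linarith [hmain, h0]
end
end
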